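/- arXiv:1010.5321 — 9 statements merged into one kernel-verified Lean document; each statement's English description precedes it below -/
import Mathlib

section
/- Let n ≥ 2, k > 0, and define F : ℝⁿ → ℝⁿ by F(x)_i = k · (∏_{j=i+1}^{n−1} cosh(x_j/k)) · sinh(x_i/k) for 1 ≤ i ≤ n−1, and F(x)_n = x_n − k · ∑_{j=1}^{n−1} log(cosh(x_j/k)). Then F is differentiable everywhere and the determinant of its Jacobian (total derivative) at any point x equals ∏_{i=1}^{n−1} (cosh(x_i/k))^i. -/
open MeasureTheory Real

open Finset in
def rotEquiv (n : ℕ) (hn : 0 < n) : Fin n ≃ Fin n where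
  toFun i := if (i : ℕ) = 0 then ⟨n - 1, by omega⟩ else ⟨(i : ℕ) - 1, by
    have := i.isLt; omega⟩
  invFun j := if h : (j : ℕ) = n - 1 then ⟨0, hn⟩ else ⟨(j : ℕ) + 1, by
    have := j.isLt; omega⟩
  left_inv i := by
    have hi := i.isLt
    apply Fin.ext
    by_cases h : (i : ℕ) = 0 <;> simp only [h, if_true, if_false] <;>
      split_ifs <;> simp_all <;> omega
  right_inv j := by
    have hj := j.isLt
    apply Fin.ext
    by_cases h : (j : ℕ) = n - 1 <;> simp only [h, dif_pos, dif_neg, not_false_iff] <;>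
      split_ifs <;> simp_all <;> omega

/-- The transition map from hyperbolic orthogonal coordinates of `n`-dimensional
hyperbolic space with curvature parameter `k` to flat model coordinates:
`F(x)_i = k · (∏_{j=i+1}^{n−1} cosh(x_j/k)) · sinh(x_i/k)` for `1 ≤ i ≤ n−1`
(here the indices are `0`-based, so the condition is `i < n-1`), and
`F(x)_n = x_n − k · ∑_{j=1}^{n−1} log(cosh(x_j/k))`. -/
noncomputable def hypOrthToFlat (n : ℕ) (k : ℝ) (x : Fin n → ℝ) : Fin n → ℝ := fun i =>
  if (i : ℕ) < n - 1 then
    k * (∏ j ∈ Finset.univ.filter (fun j : Fin n => (i : ℕ) < (j : ℕ) ∧ (j : ℕ) < n - 1),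
          Real.cosh (x j / k)) * Real.sinh (x i / k)
  else
    x i - k * ∑ j ∈ Finset.univ.filter (fun j : Fin n => (j : ℕ) < n - 1),
          Real.log (Real.cosh (x j / k))

noncomputable def hypJac (n : ℕ) (k : ℝ) (x : Fin n → ℝ) : Matrix (Fin n) (Fin n) ℝ :=
  fun i j =>
    if (i : ℕ) < n - 1 then
      if (j : ℕ) = (i : ℕ) then
        (∏ l ∈ Finset.univ.filter (fun l : Fin n => (i : ℕ) < (l : ℕ) ∧ (l : ℕ) < n - 1),
            Real.cosh (x l / k)) * Real.cosh (x i / k)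
      else if (i : ℕ) < (j : ℕ) ∧ (j : ℕ) < n - 1 then
        (∏ l ∈ (Finset.univ.filter
              (fun l : Fin n => (i : ℕ) < (l : ℕ) ∧ (l : ℕ) < n - 1)).erase j,
            Real.cosh (x l / k)) * Real.sinh (x j / k) * Real.sinh (x i / k)
      else 0
    else
      if (j : ℕ) < n - 1 then -(Real.sinh (x j / k) / Real.cosh (x j / k)) else 1

set_option maxHeartbeats 2000000 in
theorem hypJac_det (n : ℕ) (hn : 2 ≤ n) (k : ℝ) (x : Fin n → ℝ) :
    (hypJac n k x).det =
      ∏ i ∈ Finset.univ.filter (fun i : Fin n => (i : ℕ) < n - 1),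
        (Real.cosh (x i / k)) ^ ((i : ℕ) + 1) := by
  have hn0 : 0 < n := by omega
  set σ := rotEquiv n hn0 with hσ
  rw [← Matrix.det_submatrix_equiv_self σ (hypJac n k x)]
  have htri : ((hypJac n k x).submatrix σ σ).BlockTriangular id := by
    intro i j hlt
    have hi := i.isLt
    have hj := j.isLt
    have hlt' : (j : ℕ) < (i : ℕ) := hlt
    simp only [Matrix.submatrix_apply, hσ, rotEquiv, Equiv.coe_fn_mk, hypJac]
    by_cases hi0 : (i : ℕ) = 0
    · omega
    · by_cases hj0 : (j : ℕ) = 0 <;> simp only [hi0, hj0, if_true, if_false] <;>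
        split_ifs <;> simp_all <;> omega
  rw [Matrix.det_of_upperTriangular htri]
  have hdiag : ∀ i : Fin n, (hypJac n k x) i i =
      if (i : ℕ) < n - 1 then
        (∏ l ∈ Finset.univ.filter (fun l : Fin n => (i : ℕ) < (l : ℕ) ∧ (l : ℕ) < n - 1),
            Real.cosh (x l / k)) * Real.cosh (x i / k)
      else 1 := by
    intro i
    simp only [hypJac]
    split_ifs with h1 h2 <;> simp_all
  calc ∏ i : Fin n, ((hypJac n k x).submatrix σ σ) i i
      = ∏ i : Fin n, (hypJac n k x) (σ i) (σ i) :=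
        Finset.prod_congr rfl (fun i _ => Matrix.submatrix_apply _ _ _ _ _)
    _ = ∏ i : Fin n, (hypJac n k x) i i := Equiv.prod_comp σ (fun i => hypJac n k x i i)
    _ = ∏ i : Fin n, (if (i : ℕ) < n - 1 then
          (∏ l ∈ Finset.univ.filter (fun l : Fin n => (i : ℕ) < (l : ℕ) ∧ (l : ℕ) < n - 1),
            Real.cosh (x l / k)) * Real.cosh (x i / k) else 1) :=
        Finset.prod_congr rfl (fun i _ => hdiag i)
    _ = ∏ i ∈ Finset.univ.filter (fun i : Fin n => (i : ℕ) < n - 1),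
          (∏ l ∈ Finset.univ.filter (fun l : Fin n => (i : ℕ) < (l : ℕ) ∧ (l : ℕ) < n - 1),
            Real.cosh (x l / k)) * Real.cosh (x i / k) := (Finset.prod_filter _ _).symm
    _ = ∏ i ∈ Finset.univ.filter (fun i : Fin n => (i : ℕ) < n - 1),
          ∏ l ∈ Finset.univ.filter (fun l : Fin n => (i : ℕ) ≤ (l : ℕ) ∧ (l : ℕ) < n - 1),
            Real.cosh (x l / k) := by
        apply Finset.prod_congr rfl
        intro i hi
        simp only [Finset.mem_filter, Finset.mem_univ, true_and] at hi
        have hins : (Finset.univ.filter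
            (fun l : Fin n => (i : ℕ) ≤ (l : ℕ) ∧ (l : ℕ) < n - 1)) =
            insert i (Finset.univ.filter
              (fun l : Fin n => (i : ℕ) < (l : ℕ) ∧ (l : ℕ) < n - 1)) := by
          ext l
          simp only [Finset.mem_filter, Finset.mem_univ, true_and, Finset.mem_insert]
          constructor
          · rintro ⟨h1, h2⟩
            rcases Nat.eq_or_lt_of_le h1 with h | h
            · left; exact Fin.ext h.symm ▸ rfl
            · right; exact ⟨h, h2⟩
          · rintro (rfl | ⟨h1, h2⟩)
            · exact ⟨le_refl _, hi⟩
            · exact ⟨le_of_lt h1, h2⟩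
        rw [hins, Finset.prod_insert (by simp), mul_comm]
    _ = ∏ l ∈ Finset.univ.filter (fun l : Fin n => (l : ℕ) < n - 1),
          ∏ _i ∈ Finset.univ.filter (fun i : Fin n => (i : ℕ) ≤ (l : ℕ)),
            Real.cosh (x l / k) := by
        apply Finset.prod_comm'
        intro i l
        simp only [Finset.mem_filter, Finset.mem_univ, true_and]
        omega
    _ = ∏ l ∈ Finset.univ.filter (fun l : Fin n => (l : ℕ) < n - 1),
          (Real.cosh (x l / k)) ^ ((l : ℕ) + 1) := by
        apply Finset.prod_congr rfl
        intro l hl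
        rw [Finset.prod_const]
        congr 1
        have : (Finset.univ.filter (fun i : Fin n => (i : ℕ) ≤ (l : ℕ))) = Finset.Iic l := by
          ext i
          simp only [Finset.mem_filter, Finset.mem_univ, true_and, Finset.mem_Iic, Fin.le_def]
        rw [this, Fin.card_Iic]

set_option maxHeartbeats 1000000 in
theorem hypOrth_hasFDerivAt (n : ℕ) (hn : 2 ≤ n) (k : ℝ) (hk : 0 < k) (x : Fin n → ℝ) :
    HasFDerivAt (hypOrthToFlat n k)
      (LinearMap.toContinuousLinearMap (Matrix.toLin' (hypJac n k x))) x := by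
  have hk0 : k ≠ 0 := ne_of_gt hk
  have hscal : ∀ t : ℝ, k * (Real.cosh t * (1 / k)) = Real.cosh t := by
    intro t; field_simp
  rw [hasFDerivAt_pi']
  intro i
  by_cases hi : (i : ℕ) < n - 1
  · -- row i < n - 1
    set S : Finset (Fin n) :=
      Finset.univ.filter (fun l : Fin n => (i : ℕ) < (l : ℕ) ∧ (l : ℕ) < n - 1) with hS
    have hiS : i ∉ S := by simp [hS]
    set g : Fin n → (Fin n → ℝ) → ℝ := fun j y =>
      if (j : ℕ) = (i : ℕ) then k * Real.sinh (y j / k) else Real.cosh (y j / k) with hg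
    set g' : Fin n → ((Fin n → ℝ) →L[ℝ] ℝ) := fun j =>
      (if (j : ℕ) = (i : ℕ) then k * (Real.cosh (x j / k) * (1 / k))
        else Real.sinh (x j / k) * (1 / k)) • (ContinuousLinearMap.proj j) with hg'
    have hprodS : ∀ (y : Fin n → ℝ) (u : Finset (Fin n)), u ⊆ S →
        ∏ j ∈ u, g j y = ∏ j ∈ u, Real.cosh (y j / k) := by
      intro y u hu
      apply Finset.prod_congr rfl
      intro j hj
      have hj' := hu hj
      simp only [hS, Finset.mem_filter, Finset.mem_univ, true_and] at hj'
      simp only [hg, if_neg (by omega : ¬ (j : ℕ) = (i : ℕ))]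
    have hcomp : (fun y => hypOrthToFlat n k y i) = (fun y => ∏ j ∈ insert i S, g j y) := by
      funext y
      rw [Finset.prod_insert hiS, hprodS y S (le_refl _)]
      simp only [hypOrthToFlat, if_pos hi, hg, if_pos rfl, ← hS]
      ring
    rw [hcomp]
    have hder : ∀ j ∈ insert i S, HasFDerivAt (fun y => g j y) (g' j) x := by
      intro j _
      by_cases hji : (j : ℕ) = (i : ℕ)
      · simp only [hg, hg', if_pos hji]
        have := (((Real.hasDerivAt_sinh (x j / k)).comp (x j)
          ((hasDerivAt_id (x j)).div_const k)).const_mul k).comp_hasFDerivAt x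
          (hasFDerivAt_apply (𝕜 := ℝ) j x)
        exact this
      · simp only [hg, hg', if_neg hji]
        exact ((Real.hasDerivAt_cosh (x j / k)).comp (x j)
          ((hasDerivAt_id (x j)).div_const k)).comp_hasFDerivAt x
          (hasFDerivAt_apply (𝕜 := ℝ) j x)
    refine (HasFDerivAt.finset_prod hder).congr_fderiv ?_
    apply ContinuousLinearMap.ext
    intro v
    simp only [ContinuousLinearMap.sum_apply, ContinuousLinearMap.smul_apply,
      ContinuousLinearMap.coe_comp', Function.comp_apply,
      LinearMap.coe_toContinuousLinearMap', Matrix.toLin'_apply,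
      ContinuousLinearMap.proj_apply, smul_eq_mul]
    have hmv : (hypJac n k x).mulVec v i = ∑ j : Fin n, hypJac n k x i j * v j := by
      simp [Matrix.mulVec, dotProduct]
    rw [hmv]
    rw [← Finset.sum_subset (Finset.subset_univ (insert i S)) ?hz]
    case hz =>
      intro j _ hj
      simp only [Finset.mem_insert, hS, Finset.mem_filter, Finset.mem_univ, true_and,
        not_or, not_and] at hj
      have h1 : ¬ (j : ℕ) = (i : ℕ) := fun h => hj.1 (Fin.ext h)
      have h2 : ¬ ((i : ℕ) < (j : ℕ) ∧ (j : ℕ) < n - 1) := fun h => hj.2 h.1 h.2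
      simp only [hypJac]
      rw [if_pos hi, if_neg h1, if_neg h2, zero_mul]
    apply Finset.sum_congr rfl
    intro j hj
    rcases Finset.mem_insert.1 hj with hji' | hjS
    · subst hji'
      rw [Finset.erase_insert hiS, hprodS x S (le_refl _)]
      simp only [hg', hypJac, if_pos hi, eq_self_iff_true, ite_true,
        ContinuousLinearMap.smul_apply, ContinuousLinearMap.proj_apply, smul_eq_mul, ← hS]
      rw [hscal]
      ring
    · have hjmem := hjS
      simp only [hS, Finset.mem_filter, Finset.mem_univ, true_and] at hjmem
      have hji : (j : ℕ) ≠ (i : ℕ) := by omega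
      have hjine : i ≠ j := fun h => hji (by rw [h])
      rw [Finset.erase_insert_of_ne hjine,
        Finset.prod_insert (fun h => hiS (Finset.mem_of_mem_erase h)),
        hprodS x (S.erase j) (Finset.erase_subset _ _)]
      simp only [hg, hg', if_pos rfl, if_neg hji, hypJac, if_pos hi, if_neg hji,
        if_pos (show (i : ℕ) < (j : ℕ) ∧ (j : ℕ) < n - 1 from ⟨hjmem.1, hjmem.2⟩),
        ContinuousLinearMap.smul_apply, ContinuousLinearMap.proj_apply, smul_eq_mul, ← hS]
      have h1k : Real.sinh (x j / k) * (1 / k) * v j * k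
          = Real.sinh (x j / k) * v j := by field_simp
      calc k * Real.sinh (x i / k) * (∏ l ∈ S.erase j, Real.cosh (x l / k)) *
            (Real.sinh (x j / k) * (1 / k) * v j)
          = (Real.sinh (x j / k) * (1 / k) * v j * k) * Real.sinh (x i / k) *
            (∏ l ∈ S.erase j, Real.cosh (x l / k)) := by ring
        _ = (∏ l ∈ S.erase j, Real.cosh (x l / k)) * Real.sinh (x j / k) *
            Real.sinh (x i / k) * v j := by rw [h1k]; ring
  · -- last row
    have hcomp : (fun y => hypOrthToFlat n k y i) = (fun y => y i -
        k * ∑ j ∈ Finset.univ.filter (fun j : Fin n => (j : ℕ) < n - 1),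
          Real.log (Real.cosh (y j / k))) := by
      funext y
      simp only [hypOrthToFlat, if_neg hi]
    rw [hcomp]
    have hder : HasFDerivAt (fun y : Fin n → ℝ => y i -
        k * ∑ j ∈ Finset.univ.filter (fun j : Fin n => (j : ℕ) < n - 1),
          Real.log (Real.cosh (y j / k)))
        ((ContinuousLinearMap.proj i) -
          k • ∑ j ∈ Finset.univ.filter (fun j : Fin n => (j : ℕ) < n - 1),
            ((Real.cosh (x j / k))⁻¹ * (Real.sinh (x j / k) * (1 / k))) •
              (ContinuousLinearMap.proj j : (Fin n → ℝ) →L[ℝ] ℝ)) x := by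
      apply HasFDerivAt.sub
      · exact hasFDerivAt_apply i x
      · apply HasFDerivAt.const_mul
        apply HasFDerivAt.fun_sum
        intro j _
        exact ((Real.hasDerivAt_log (ne_of_gt (Real.cosh_pos (x j / k)))).comp (x j)
          ((Real.hasDerivAt_cosh (x j / k)).comp (x j)
            ((hasDerivAt_id (x j)).div_const k))).comp_hasFDerivAt x
          (hasFDerivAt_apply (𝕜 := ℝ) j x)
    refine hder.congr_fderiv ?_
    apply ContinuousLinearMap.ext
    intro v
    simp only [ContinuousLinearMap.sub_apply, ContinuousLinearMap.smul_apply,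
      ContinuousLinearMap.sum_apply, ContinuousLinearMap.coe_comp', Function.comp_apply,
      LinearMap.coe_toContinuousLinearMap', Matrix.toLin'_apply,
      ContinuousLinearMap.proj_apply, smul_eq_mul]
    have hmv : (hypJac n k x).mulVec v i = ∑ j : Fin n, hypJac n k x i j * v j := by
      simp [Matrix.mulVec, dotProduct]
    rw [hmv]
    rw [← Finset.sum_filter_add_sum_filter_not Finset.univ
      (fun j : Fin n => (j : ℕ) < n - 1) (fun j => hypJac n k x i j * v j)]
    have hsingle : Finset.univ.filter (fun j : Fin n => ¬ (j : ℕ) < n - 1) = {i} := by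
      ext j
      have hj := j.isLt
      have hii := i.isLt
      simp only [Finset.mem_filter, Finset.mem_univ, true_and, Finset.mem_singleton]
      constructor
      · intro h; exact Fin.ext (by omega)
      · rintro rfl; exact hi
    rw [hsingle, Finset.sum_singleton]
    have h1 : hypJac n k x i i = 1 := by
      simp only [hypJac]
      rw [if_neg hi, if_neg hi]
    rw [h1, one_mul]
    have h2 : ∀ j ∈ Finset.univ.filter (fun j : Fin n => (j : ℕ) < n - 1),
        hypJac n k x i j * v j =
          -(k * ((Real.cosh (x j / k))⁻¹ * (Real.sinh (x j / k) * (1 / k)) * v j)) := by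
      intro j hj
      simp only [Finset.mem_filter, Finset.mem_univ, true_and] at hj
      simp only [hypJac]
      rw [if_neg hi, if_pos hj]
      have hc : Real.cosh (x j / k) ≠ 0 := ne_of_gt (Real.cosh_pos _)
      field_simp
    rw [Finset.sum_congr rfl h2, Finset.mul_sum]
    rw [Finset.sum_neg_distrib]
    ring

/-- The transition map from hyperbolic orthogonal coordinates is differentiable and its
Jacobian determinant at `x` equals `∏_{i=1}^{n−1} cosh(x_i/k)^i`
(with `0`-based indices the exponent of the `i`-th factor is `i + 1`). -/
theorem hypOrthToFlat_differentiable_and_jacobian (n : ℕ) (hn : 2 ≤ n) (k : ℝ) (hk : 0 < k) :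
    Differentiable ℝ (hypOrthToFlat n k) ∧
      ∀ x : Fin n → ℝ,
        (fderiv ℝ (hypOrthToFlat n k) x).det =
          ∏ i ∈ Finset.univ.filter (fun i : Fin n => (i : ℕ) < n - 1),
            (Real.cosh (x i / k)) ^ ((i : ℕ) + 1) := by
  constructor
  · intro x
    exact (hypOrth_hasFDerivAt n hn k hk x).differentiableAt
  · intro x
    rw [(hypOrth_hasFDerivAt n hn k hk x).fderiv]
    rw [ContinuousLinearMap.det]
    rw [LinearMap.coe_toContinuousLinearMap, LinearMap.det_toLin']
    exact hypJac_det n hn k x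
end

section
/- Let n ≥ 2, k > 0, and define F : ℝⁿ → ℝⁿ by F(x)_i = k · (∏_{j=i+1}^{n−1} cosh(x_j/k)) · sinh(x_i/k) for 1 ≤ i ≤ n−1, and F(x)_n = x_n − k · ∑_{j=1}^{n−1} log(cosh(x_j/k)). Then F is injective, and for every measurable set D ⊆ ℝⁿ the Lebesgue measure of F(D) equals ∫_D ∏_{i=1}^{n−1} (cosh(x_i/k))^i dx_1 ⋯ dx_n. -/
open MeasureTheory Real

theorem card_lt_aux (N v : ℕ) (hv : v ≤ N) :
    (Finset.univ.filter (fun i : Fin N => (i : ℕ) < v)).card = v := by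
  conv_rhs => rw [← Finset.card_range v]
  apply Finset.card_bij' (fun (i : Fin N) _ => (i : ℕ))
    (fun t ht => (⟨t, lt_of_lt_of_le (Finset.mem_range.1 ht) hv⟩ : Fin N))
  all_goals (intro a ha; simp only [Finset.mem_filter, Finset.mem_range, Finset.mem_univ,
    true_and] at ha ⊢ <;> simp [ha])

theorem prod_filter_lt' (m : ℕ) (p : Fin (m+1) → Prop) [DecidablePred p] (f : Fin (m+1) → ℝ) :
    ∏ l ∈ Finset.univ.filter (fun l : Fin (m+1) => p l ∧ (l : ℕ) < m), f l
      = ∏ l ∈ Finset.univ.filter (fun l : Fin m => p l.castSucc), f l.castSucc := by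
  have hset : Finset.univ.filter (fun l : Fin (m+1) => p l ∧ (l : ℕ) < m)
      = (Finset.univ.filter (fun l : Fin m => p l.castSucc)).image Fin.castSucc := by
    ext l
    simp only [Finset.mem_image, Finset.mem_filter, Finset.mem_univ, true_and]
    constructor
    · rintro ⟨hp, hl⟩
      exact ⟨⟨(l : ℕ), hl⟩, by simpa [Fin.ext_iff] using hp, by simp [Fin.ext_iff]⟩
    · rintro ⟨a, ha, rfl⟩
      exact ⟨ha, a.isLt⟩
  rw [hset, Finset.prod_image (by intro a _ b _ h; exact Fin.castSucc_injective _ h)]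

theorem prod_filter_lt (m : ℕ) (f : Fin (m+1) → ℝ) :
    ∏ l ∈ Finset.univ.filter (fun l : Fin (m+1) => (l : ℕ) < m), f l
      = ∏ l : Fin m, f l.castSucc := by
  rw [show (Finset.univ.filter (fun l : Fin (m+1) => (l : ℕ) < m))
      = Finset.univ.filter (fun l : Fin (m+1) => True ∧ (l : ℕ) < m) by simp,
    prod_filter_lt' m (fun _ => True) f]
  simp

noncomputable def Mmat (n : ℕ) (k : ℝ) (x : Fin n → ℝ) : Matrix (Fin n) (Fin n) ℝ := fun i j =>
  if (i : ℕ) < n - 1 then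
    if j = i then
      (∏ l ∈ Finset.univ.filter (fun l : Fin n => (i : ℕ) < (l : ℕ) ∧ (l : ℕ) < n - 1),
        Real.cosh (x l / k)) * Real.cosh (x i / k)
    else if (i : ℕ) < (j : ℕ) ∧ (j : ℕ) < n - 1 then
      Real.sinh (x i / k) *
        ((∏ l ∈ (Finset.univ.filter (fun l : Fin n => (i : ℕ) < (l : ℕ) ∧ (l : ℕ) < n - 1)).erase j,
            Real.cosh (x l / k)) * Real.sinh (x j / k))
    else 0
  else
    if (j : ℕ) < n - 1 then -(Real.sinh (x j / k) / Real.cosh (x j / k))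
    else if j = i then 1 else 0

theorem det_Mmat (m : ℕ) (k : ℝ) (x : Fin (m+1) → ℝ) :
    (Mmat (m+1) k x).det
      = ∏ i ∈ Finset.univ.filter (fun i : Fin (m+1) => (i : ℕ) < m),
          Real.cosh (x i / k) ^ ((i : ℕ) + 1) := by
  classical
  set M := Mmat (m+1) k x with hM
  set A : Matrix (Fin m) (Fin m) ℝ := Matrix.of fun i j => M i.castSucc j.castSucc with hA
  set C : Matrix (Fin 1) (Fin m) ℝ := Matrix.of fun i j => M (Fin.natAdd m i) j.castSucc with hC
  set D : Matrix (Fin 1) (Fin 1) ℝ := Matrix.of fun i j => M (Fin.natAdd m i) (Fin.natAdd m j) with hD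
  have hsub : M.submatrix finSumFinEquiv finSumFinEquiv = Matrix.fromBlocks A 0 C D := by
    ext i j
    rcases i with i | i <;> rcases j with j | j <;>
      simp only [Matrix.submatrix_apply, finSumFinEquiv_apply_left, finSumFinEquiv_apply_right,
        Matrix.fromBlocks_apply₁₁, Matrix.fromBlocks_apply₁₂, Matrix.fromBlocks_apply₂₁,
        Matrix.fromBlocks_apply₂₂, hA, hC, hD, Matrix.of_apply, Matrix.zero_apply]
    · rfl
    · -- B = 0
      simp only [hM, Mmat]
      have h1 : ((Fin.castAdd 1 i : Fin (m+1)) : ℕ) < m + 1 - 1 := by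
        simpa using i.isLt
      have hj0 : (j : ℕ) = 0 := by omega
      have jv : ((Fin.natAdd m j : Fin (m+1)) : ℕ) = m := by
        simp [Fin.coe_natAdd, hj0]
      rw [if_pos h1, if_neg, if_neg]
      · rw [jv]; simp only [Fin.coe_castAdd, not_and]; intro _; omega
      · simp only [Fin.ext_iff, jv, Fin.coe_castAdd]; omega
    · rfl
  have hdet1 : M.det = A.det * D.det := by
    rw [← Matrix.det_submatrix_equiv_self finSumFinEquiv M, hsub,
      Matrix.det_fromBlocks_zero₁₂]
  have hDdet : D.det = 1 := by
    rw [Matrix.det_fin_one]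
    simp only [hD, Matrix.of_apply, hM, Mmat]
    rw [if_neg (by simp), if_neg (by simp)]
    simp
  have hAtri : A.BlockTriangular id := by
    intro i j hij
    simp only [id_eq] at hij
    simp only [hA, Matrix.of_apply, hM, Mmat]
    have h1 : ((i.castSucc : Fin (m+1)) : ℕ) < m + 1 - 1 := by simp [i.isLt]
    rw [if_pos h1, if_neg, if_neg]
    · simp only [Fin.coe_castSucc, not_and]; intro h; omega
    · simp only [Fin.ext_iff, Fin.coe_castSucc]; omega
  have hAdet : A.det = ∏ i : Fin m, A i i := Matrix.det_of_upperTriangular hAtri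
  rw [hdet1, hDdet, hAdet, mul_one]
  -- now compute the product of diagonal entries
  have hdiag : ∀ i : Fin m, A i i
      = (∏ l ∈ Finset.univ.filter
            (fun l : Fin (m+1) => ((i.castSucc : Fin (m+1)) : ℕ) < (l : ℕ) ∧ (l : ℕ) < m + 1 - 1),
          Real.cosh (x l / k)) * Real.cosh (x i.castSucc / k) := by
    intro i
    simp only [hA, Matrix.of_apply, hM, Mmat]
    rw [if_pos (by simpa using i.isLt)]
    simp
  rw [Finset.prod_congr rfl (fun i _ => hdiag i), Finset.prod_mul_distrib]
  have hinner : ∀ i : Fin m,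
      (∏ l ∈ Finset.univ.filter
          (fun l : Fin (m+1) => ((i.castSucc : Fin (m+1)) : ℕ) < (l : ℕ) ∧ (l : ℕ) < m + 1 - 1),
        Real.cosh (x l / k))
      = ∏ l ∈ Finset.univ.filter (fun l : Fin m => (i : ℕ) < (l : ℕ)),
          Real.cosh (x l.castSucc / k) := by
    intro i
    rw [show (Finset.univ.filter
          (fun l : Fin (m+1) => ((i.castSucc : Fin (m+1)) : ℕ) < (l : ℕ) ∧ (l : ℕ) < m + 1 - 1))
        = Finset.univ.filter
          (fun l : Fin (m+1) => ((i.castSucc : Fin (m+1)) : ℕ) < (l : ℕ) ∧ (l : ℕ) < m) by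
        simp [Nat.add_sub_cancel],
      prod_filter_lt' m (fun l => ((i.castSucc : Fin (m+1)) : ℕ) < (l : ℕ)) (fun l => Real.cosh (x l / k))]
    simp [Fin.coe_castSucc]
  rw [Finset.prod_congr rfl (fun i _ => hinner i)]
  have hswap : (∏ i : Fin m, ∏ l ∈ Finset.univ.filter (fun l : Fin m => (i : ℕ) < (l : ℕ)),
        Real.cosh (x l.castSucc / k))
      = ∏ l : Fin m, ∏ i ∈ Finset.univ.filter (fun i : Fin m => (i : ℕ) < (l : ℕ)),
          Real.cosh (x l.castSucc / k) := by
    apply Finset.prod_comm'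
    intro i l; simp [and_comm]
  rw [hswap]
  have hpow : ∀ l : Fin m,
      (∏ i ∈ Finset.univ.filter (fun i : Fin m => (i : ℕ) < (l : ℕ)),
        Real.cosh (x l.castSucc / k)) = Real.cosh (x l.castSucc / k) ^ (l : ℕ) := by
    intro l
    rw [Finset.prod_const, card_lt_aux m (l : ℕ) (le_of_lt l.isLt)]
  rw [Finset.prod_congr rfl (fun l _ => hpow l), prod_filter_lt m
    (fun i => Real.cosh (x i / k) ^ ((i : ℕ) + 1)), ← Finset.prod_mul_distrib]
  exact Finset.prod_congr rfl (fun i _ => by rw [Fin.coe_castSucc, pow_succ])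

noncomputable def Fder (n : ℕ) (k : ℝ) (x : Fin n → ℝ) : (Fin n → ℝ) →L[ℝ] (Fin n → ℝ) :=
  LinearMap.toContinuousLinearMap (Matrix.toLin' (Mmat n k x))

open ContinuousLinearMap in
theorem hasFDerivAt_hypOrthToFlat (n : ℕ) (k : ℝ) (hk : 0 < k) (x : Fin n → ℝ) :
    HasFDerivAt (hypOrthToFlat n k) (Fder n k x) x := by
  classical
  have hk0 : k ≠ 0 := ne_of_gt hk
  rw [hasFDerivAt_pi']
  intro i
  -- derivative of y ↦ y j / k
  have hdiv : ∀ j : Fin n, HasFDerivAt (fun y : Fin n → ℝ => y j / k)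
      (k⁻¹ • (proj j : (Fin n → ℝ) →L[ℝ] ℝ)) x := by
    intro j
    simpa [div_eq_inv_mul, mul_comm] using
      ((hasFDerivAt_apply j x).mul_const k⁻¹ : HasFDerivAt (fun y : Fin n → ℝ => y j * k⁻¹) _ x)
  have hcosh : ∀ j : Fin n, HasFDerivAt (fun y : Fin n → ℝ => Real.cosh (y j / k))
      (Real.sinh (x j / k) • (k⁻¹ • (proj j : (Fin n → ℝ) →L[ℝ] ℝ))) x :=
    fun j => (hdiv j).cosh
  by_cases hi : (i : ℕ) < n - 1
  · -- main coordinates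
    have hfun : (fun y => hypOrthToFlat n k y i)
        = fun y => k * (∏ j ∈ Finset.univ.filter
            (fun j : Fin n => (i : ℕ) < (j : ℕ) ∧ (j : ℕ) < n - 1),
            Real.cosh (y j / k)) * Real.sinh (y i / k) := by
      funext y; simp [hypOrthToFlat, hi]
    set S := Finset.univ.filter (fun j : Fin n => (i : ℕ) < (j : ℕ) ∧ (j : ℕ) < n - 1) with hS
    have hprod : HasFDerivAt (fun y : Fin n → ℝ => ∏ j ∈ S, Real.cosh (y j / k))
        (∑ j ∈ S, (∏ l ∈ S.erase j, Real.cosh (x l / k)) •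
          (Real.sinh (x j / k) • (k⁻¹ • (proj j : (Fin n → ℝ) →L[ℝ] ℝ)))) x :=
      HasFDerivAt.finset_prod (fun j _ => hcosh j)
    have hsinh : HasFDerivAt (fun y : Fin n → ℝ => Real.sinh (y i / k))
        (Real.cosh (x i / k) • (k⁻¹ • (proj i : (Fin n → ℝ) →L[ℝ] ℝ))) x := (hdiv i).sinh
    have hmul := (hprod.const_mul k).mul hsinh
    rw [hfun]
    refine hmul.congr_fderiv ?_
    symm
    apply ContinuousLinearMap.ext
    intro v
    have hiS : i ∉ S := by simp [hS]
    have hsplit : ∑ j : Fin n, Mmat n k x i j * v j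
        = Mmat n k x i i * v i + ∑ j ∈ S, Mmat n k x i j * v j := by
      have h1 : ∑ j : Fin n, Mmat n k x i j * v j
          = ∑ j ∈ insert i S, Mmat n k x i j * v j := by
        refine (Finset.sum_subset (Finset.subset_univ _) ?_).symm
        intro j _ hj
        simp only [Finset.mem_insert, not_or, hS, Finset.mem_filter, Finset.mem_univ, true_and,
          not_and] at hj
        have h0 : Mmat n k x i j = 0 := by
          simp only [Mmat, if_pos hi]
          rw [if_neg hj.1, if_neg]
          intro h; exact (hj.2 h.1) h.2
        rw [h0, zero_mul]
      rw [h1, Finset.sum_insert hiS]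
    have hMii : Mmat n k x i i
        = (∏ l ∈ S, Real.cosh (x l / k)) * Real.cosh (x i / k) := by
      simp only [Mmat, if_pos hi, hS]
      simp
    have hMij : ∀ j ∈ S, Mmat n k x i j
        = Real.sinh (x i / k) * ((∏ l ∈ S.erase j, Real.cosh (x l / k)) * Real.sinh (x j / k)) := by
      intro j hj
      simp only [hS, Finset.mem_filter, Finset.mem_univ, true_and] at hj
      have hji : j ≠ i := by intro h; subst h; omega
      simp only [Mmat, if_pos hi, if_neg hji, if_pos hj, hS]
    -- compute both sides
    simp only [ContinuousLinearMap.comp_apply, Fder, LinearMap.coe_toContinuousLinearMap',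
      Matrix.toLin'_apply, Matrix.mulVec, dotProduct, ContinuousLinearMap.proj_apply,
      ContinuousLinearMap.add_apply, ContinuousLinearMap.smul_apply,
      ContinuousLinearMap.coe_sum', Finset.sum_apply, smul_eq_mul]
    rw [hsplit, hMii]
    rw [Finset.sum_congr rfl (fun j hj => by rw [hMij j hj])]
    rw [Finset.mul_sum, Finset.mul_sum]
    congr 1
    · field_simp
    · refine Finset.sum_congr rfl (fun j hj => ?_)
      field_simp
  · -- last coordinate
    have hfun : (fun y => hypOrthToFlat n k y i)
        = fun y => y i - k * ∑ j ∈ Finset.univ.filter (fun j : Fin n => (j : ℕ) < n - 1),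
            Real.log (Real.cosh (y j / k)) := by
      funext y; simp [hypOrthToFlat, hi]
    set T := Finset.univ.filter (fun j : Fin n => (j : ℕ) < n - 1) with hT
    have hlog : ∀ j : Fin n, HasFDerivAt (fun y : Fin n → ℝ => Real.log (Real.cosh (y j / k)))
        ((Real.cosh (x j / k))⁻¹ •
          (Real.sinh (x j / k) • (k⁻¹ • (proj j : (Fin n → ℝ) →L[ℝ] ℝ)))) x :=
      fun j => (hcosh j).log (ne_of_gt (Real.cosh_pos _))
    have hsum : HasFDerivAt
        (fun y : Fin n → ℝ => ∑ j ∈ T, Real.log (Real.cosh (y j / k)))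
        (∑ j ∈ T, (Real.cosh (x j / k))⁻¹ •
          (Real.sinh (x j / k) • (k⁻¹ • (proj j : (Fin n → ℝ) →L[ℝ] ℝ)))) x :=
      HasFDerivAt.fun_sum (fun j _ => hlog j)
    have htot := (hasFDerivAt_apply i x).sub (hsum.const_mul k)
    rw [hfun]
    refine htot.congr_fderiv ?_
    symm
    apply ContinuousLinearMap.ext
    intro v
    have hiT : i ∉ T := by simp [hT]; omega
    have hsplit : ∑ j : Fin n, Mmat n k x i j * v j
        = Mmat n k x i i * v i + ∑ j ∈ T, Mmat n k x i j * v j := by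
      have h1 : ∑ j : Fin n, Mmat n k x i j * v j
          = ∑ j ∈ insert i T, Mmat n k x i j * v j := by
        refine (Finset.sum_subset (Finset.subset_univ _) ?_).symm
        intro j _ hj
        simp only [Finset.mem_insert, not_or, hT, Finset.mem_filter, Finset.mem_univ,
          true_and] at hj
        have h0 : Mmat n k x i j = 0 := by
          simp only [Mmat, if_neg hi]
          rw [if_neg hj.2, if_neg hj.1]
        rw [h0, zero_mul]
      rw [h1, Finset.sum_insert hiT]
    have hMii : Mmat n k x i i = 1 := by
      simp only [Mmat, if_neg hi]
      simp
    have hMij : ∀ j ∈ T, Mmat n k x i j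
        = -(Real.sinh (x j / k) / Real.cosh (x j / k)) := by
      intro j hj
      simp only [hT, Finset.mem_filter, Finset.mem_univ, true_and] at hj
      simp only [Mmat, if_neg hi, if_pos hj]
    simp only [ContinuousLinearMap.comp_apply, Fder, LinearMap.coe_toContinuousLinearMap',
      Matrix.toLin'_apply, Matrix.mulVec, dotProduct, ContinuousLinearMap.proj_apply,
      ContinuousLinearMap.sub_apply, ContinuousLinearMap.smul_apply,
      ContinuousLinearMap.coe_sum', Finset.sum_apply, smul_eq_mul]
    rw [hsplit, hMii, one_mul, sub_eq_add_neg]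
    congr 1
    rw [Finset.mul_sum, ← Finset.sum_neg_distrib]
    refine Finset.sum_congr rfl (fun j hj => ?_)
    rw [hMij j hj]
    have hc : Real.cosh (x j / k) ≠ 0 := ne_of_gt (Real.cosh_pos _)
    field_simp <;> ring

theorem hypOrthToFlat_inj (n : ℕ) (k : ℝ) (hk : 0 < k) :
    Function.Injective (hypOrthToFlat n k) := by
  intro x y h
  have hk0 : k ≠ 0 := ne_of_gt hk
  have key : ∀ d : ℕ, ∀ i : Fin n, n - 1 - d ≤ (i : ℕ) → (i : ℕ) < n - 1 → x i = y i := by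
    intro d
    induction d with
    | zero => intro i h1 h2; omega
    | succ d ih =>
      intro i h1 h2
      have hFi := congrFun h i
      simp only [hypOrthToFlat, if_pos h2] at hFi
      have hprod : (∏ j ∈ Finset.univ.filter
            (fun j : Fin n => (i : ℕ) < (j : ℕ) ∧ (j : ℕ) < n - 1), Real.cosh (x j / k))
          = ∏ j ∈ Finset.univ.filter
            (fun j : Fin n => (i : ℕ) < (j : ℕ) ∧ (j : ℕ) < n - 1), Real.cosh (y j / k) := by
        refine Finset.prod_congr rfl (fun j hj => ?_)
        simp only [Finset.mem_filter, Finset.mem_univ, true_and] at hj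
        rw [ih j (by omega) hj.2]
      rw [hprod] at hFi
      have hP : 0 < ∏ j ∈ Finset.univ.filter
          (fun j : Fin n => (i : ℕ) < (j : ℕ) ∧ (j : ℕ) < n - 1), Real.cosh (y j / k) :=
        Finset.prod_pos (fun j _ => Real.cosh_pos _)
      have hs : Real.sinh (x i / k) = Real.sinh (y i / k) :=
        mul_left_cancel₀ (mul_ne_zero hk0 (ne_of_gt hP)) hFi
      have := Real.sinh_injective hs
      field_simp at this
      exact this
  funext i
  by_cases h2 : (i : ℕ) < n - 1
  · exact key (n - 1) i (by omega) h2
  · have hFi := congrFun h i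
    simp only [hypOrthToFlat, if_neg h2] at hFi
    have hsum : (∑ j ∈ Finset.univ.filter (fun j : Fin n => (j : ℕ) < n - 1),
          Real.log (Real.cosh (x j / k)))
        = ∑ j ∈ Finset.univ.filter (fun j : Fin n => (j : ℕ) < n - 1),
          Real.log (Real.cosh (y j / k)) := by
      refine Finset.sum_congr rfl (fun j hj => ?_)
      simp only [Finset.mem_filter, Finset.mem_univ, true_and] at hj
      rw [key (n - 1) j (by omega) hj]
    rw [hsum] at hFi
    linarith


/-- The transition map is injective, and the Lebesgue measure of the image of any
measurable set `D` equals `∫_D ∏_{i=1}^{n−1} cosh(x_i/k)^i dx`. -/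
theorem hypOrthToFlat_injective_and_measure_image (n : ℕ) (hn : 2 ≤ n) (k : ℝ) (hk : 0 < k) :
    Function.Injective (hypOrthToFlat n k) ∧
      ∀ D : Set (Fin n → ℝ), MeasurableSet D →
        volume (hypOrthToFlat n k '' D) =
          ∫⁻ x in D, ENNReal.ofReal
            (∏ i ∈ Finset.univ.filter (fun i : Fin n => (i : ℕ) < n - 1),
              (Real.cosh (x i / k)) ^ ((i : ℕ) + 1)) := by

  obtain ⟨m, rfl⟩ : ∃ m, n = m + 1 := ⟨n - 1, by omega⟩
  refine ⟨hypOrthToFlat_inj _ _ hk, fun D hD => ?_⟩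
  rw [← MeasureTheory.lintegral_abs_det_fderiv_eq_addHaar_image volume hD
      (fun x _ => (hasFDerivAt_hypOrthToFlat _ _ hk x).hasFDerivWithinAt)
      ((hypOrthToFlat_inj _ _ hk).injOn)]
  refine lintegral_congr (fun x => ?_)
  congr 1
  have hdet : (Fder (m+1) k x).det = (Mmat (m+1) k x).det := by
    simp only [Fder, ContinuousLinearMap.det, LinearMap.coe_toContinuousLinearMap,
      LinearMap.det_toLin']
  rw [hdet, det_Mmat]
  rw [abs_of_nonneg (Finset.prod_nonneg (fun i _ => pow_nonneg (le_of_lt (Real.cosh_pos _)) _))]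
  norm_num
end

section
/- Let n ≥ 2, k > 0, and define Φ : ℝⁿ → ℝⁿ by Φ(ξ) = (ξ_1, …, ξ_{n−1}, e^{ξ_n/k}). Then Φ is injective and for every measurable set D ⊆ ℝⁿ, ∫_D e^{−(n−1)·ξ_n/k} dξ_1 ⋯ dξ_n = k · ∫_{Φ(D)} x_n^{−n} dx_1 ⋯ dx_n. -/
open MeasureTheory Real

/-- The transition map from paracycle (horocycle) coordinates of `n`-dimensional
hyperbolic space with curvature parameter `k` to Cartesian coordinates of the
Poincaré half-space model: `Φ(ξ) = (ξ_1, …, ξ_{n−1}, e^{ξ_n/k})`. -/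
noncomputable def paracycleToHalfSpace (n : ℕ) (k : ℝ) (ξ : Fin n → ℝ) : Fin n → ℝ := fun i =>
  if (i : ℕ) < n - 1 then ξ i else Real.exp (ξ i / k)

/-- The derivative of `paracycleToHalfSpace` at `ξ`. -/
noncomputable def paracycleDeriv (n : ℕ) (k : ℝ) (ξ : Fin n → ℝ) :
    (Fin n → ℝ) →L[ℝ] (Fin n → ℝ) :=
  ContinuousLinearMap.pi fun i =>
    (if (i : ℕ) < n - 1 then (1 : ℝ) else Real.exp (ξ i / k) / k) • ContinuousLinearMap.proj i

lemma paracycleHasFDeriv (n : ℕ) (k : ℝ) (hk : 0 < k) (ξ : Fin n → ℝ) :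
    HasFDerivAt (paracycleToHalfSpace n k) (paracycleDeriv n k ξ) ξ := by
  rw [hasFDerivAt_pi']
  intro i
  unfold paracycleToHalfSpace paracycleDeriv
  simp only [ContinuousLinearMap.proj_pi]
  by_cases h : (i : ℕ) < n - 1
  · simp only [h, if_true, one_smul]
    exact (ContinuousLinearMap.proj (R := ℝ) (φ := fun _ : Fin n => ℝ) i).hasFDerivAt
  · simp only [h, if_false]
    have h1 : HasFDerivAt (fun ξ : Fin n → ℝ => ξ i / k)
        (k⁻¹ • ContinuousLinearMap.proj (R := ℝ) (φ := fun _ : Fin n => ℝ) i) ξ := by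
      simpa [div_eq_mul_inv] using (ContinuousLinearMap.proj (R := ℝ)
        (φ := fun _ : Fin n => ℝ) i).hasFDerivAt.mul_const k⁻¹
    have := h1.exp
    simpa [smul_smul, div_eq_mul_inv] using this

lemma paracycleDeriv_det (n : ℕ) (hn : 1 < n) (k : ℝ) (ξ : Fin n → ℝ) :
    (paracycleDeriv n k ξ).det = Real.exp (ξ ⟨n - 1, by omega⟩ / k) / k := by
  rw [ContinuousLinearMap.det, ← LinearMap.det_toMatrix (Pi.basisFun ℝ (Fin n))]
  have : LinearMap.toMatrix (Pi.basisFun ℝ (Fin n)) (Pi.basisFun ℝ (Fin n))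
      (paracycleDeriv n k ξ : (Fin n → ℝ) →ₗ[ℝ] (Fin n → ℝ)) =
      Matrix.diagonal fun i : Fin n => if (i : ℕ) < n - 1 then (1 : ℝ)
        else Real.exp (ξ i / k) / k := by
    ext i j
    by_cases h : i = j
    · subst h
      by_cases hc : (i : ℕ) < n - 1 <;>
        simp [paracycleDeriv, hc, Pi.single_apply, Matrix.diagonal, LinearMap.toMatrix_apply]
    · by_cases hc : (i : ℕ) < n - 1 <;>
        simp [paracycleDeriv, hc, h, Pi.single_apply, Matrix.diagonal, LinearMap.toMatrix_apply]
  rw [this, Matrix.det_diagonal]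
  rw [Finset.prod_eq_single (⟨n - 1, by omega⟩ : Fin n)]
  · simp
  · intro b _ hb
    have : (b : ℕ) < n - 1 := by
      rcases lt_or_eq_of_le (Nat.lt_succ_iff.mp (by omega : (b : ℕ) < (n-1) + 1)) with h | h
      · exact h
      · exact absurd (Fin.ext h) hb
    simp [this]
  · simp

/-- `Φ` is injective and for every measurable `D ⊆ ℝⁿ`,
`∫_D e^{−(n−1)·ξ_n/k} dξ = k · ∫_{Φ(D)} x_n^{−n} dx`. -/
theorem paracycleToHalfSpace_injective_and_integral (n : ℕ) (hn : 2 ≤ n) (k : ℝ) (hk : 0 < k) :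
    Function.Injective (paracycleToHalfSpace n k) ∧
      ∀ D : Set (Fin n → ℝ), MeasurableSet D →
        (∫⁻ ξ in D, ENNReal.ofReal (Real.exp (-((n : ℝ) - 1) * ξ ⟨n - 1, by omega⟩ / k))) =
          ENNReal.ofReal k *
            ∫⁻ x in (paracycleToHalfSpace n k '' D),
              ENNReal.ofReal ((x ⟨n - 1, by omega⟩ ^ n)⁻¹) := by
  have hinj : Function.Injective (paracycleToHalfSpace n k) := by
    intro ξ η h
    funext i
    have hi := congrFun h i
    unfold paracycleToHalfSpace at hi
    by_cases hc : (i : ℕ) < n - 1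
    · simpa [hc] using hi
    · simp only [hc, if_false] at hi
      have := Real.exp_injective hi
      field_simp at this
      exact this
  refine ⟨hinj, fun D hD => ?_⟩
  rw [lintegral_image_eq_lintegral_abs_det_fderiv_mul volume hD
      (fun x _ => (paracycleHasFDeriv n k hk x).hasFDerivWithinAt) hinj.injOn]
  rw [← lintegral_const_mul' _ _ (by simp)]
  apply lintegral_congr
  intro ξ
  rw [paracycleDeriv_det n hn k ξ]
  have hlast : paracycleToHalfSpace n k ξ ⟨n - 1, by omega⟩ =
      Real.exp (ξ ⟨n - 1, by omega⟩ / k) := by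
    simp [paracycleToHalfSpace]
  rw [hlast]
  set t := ξ ⟨n - 1, by omega⟩
  have h1 : (Real.exp (t / k) ^ n)⁻¹ = Real.exp (-(n : ℝ) * (t / k)) := by
    rw [← Real.exp_nat_mul, ← Real.exp_neg]
    ring_nf
  rw [h1, abs_of_pos (by positivity)]
  rw [← ENNReal.ofReal_mul (by positivity), ← ENNReal.ofReal_mul (by positivity)]
  congr 1
  have h2 : k * (Real.exp (t / k) / k * Real.exp (-(n : ℝ) * (t / k))) =
      Real.exp (t / k + -(n : ℝ) * (t / k)) := by
    rw [Real.exp_add]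
    field_simp
  rw [h2]
  congr 1
  field_simp
  ring
end

section
/- Let a, b, c > 0 be real numbers. Then ∫_0^a ∫_0^{φ(x)} ∫_0^{ψ(y)} cosh²(z) · cosh(y) dz dy dx = (1/4) · ∫_0^b (tanh(λ) · sinh(a) / √(tanh²(b)·cosh²(λ) + sinh²(a)·sinh²(λ))) · log((sinh(b) + tanh(c)·sinh(λ)) / (sinh(b) − tanh(c)·sinh(λ))) dλ, where φ(x) = artanh((tanh(b)/sinh(a))·sinh(x)) and ψ(y) = artanh((tanh(c)/sinh(b))·sinh(y)). -/
open MeasureTheory Real intervalIntegral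

/-- The inverse hyperbolic tangent, `_root_.artanh x = (1/2)·log((1+x)/(1−x))`. -/
noncomputable def artanh (x : ℝ) : ℝ := Real.log ((1 + x) / (1 - x)) / 2

namespace OrthoAux

lemma artanh_zero : _root_.artanh 0 = 0 := by simp [_root_.artanh]

lemma artanh_tanh (t : ℝ) : _root_.artanh (Real.tanh t) = t := by
  have hc : Real.cosh t ≠ 0 := (Real.cosh_pos t).ne'
  have h1 : 1 + Real.tanh t = Real.exp t / Real.cosh t := by
    rw [Real.tanh_eq_sinh_div_cosh, ← Real.cosh_add_sinh]; field_simp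
  have h2 : 1 - Real.tanh t = Real.exp (-t) / Real.cosh t := by
    rw [Real.tanh_eq_sinh_div_cosh, ← Real.cosh_sub_sinh]; field_simp
  have h3 : (1 + Real.tanh t) / (1 - Real.tanh t) = Real.exp (2 * t) := by
    rw [h1, h2]
    have h4 : Real.exp t / Real.cosh t / (Real.exp (-t) / Real.cosh t)
        = Real.exp t / Real.exp (-t) := by
      field_simp
    rw [h4, ← Real.exp_sub]
    ring_nf
  rw [_root_.artanh, h3, Real.log_exp]; ring

lemma hasDerivAt_artanh {u : ℝ} (h : |u| < 1) :
    HasDerivAt _root_.artanh (1 / (1 - u ^ 2)) u := by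
  obtain ⟨h1, h2⟩ := abs_lt.mp h
  have hu1 : (0:ℝ) < 1 - u := by linarith
  have hu2 : (0:ℝ) < 1 + u := by linarith
  have hq : HasDerivAt (fun x : ℝ => (1 + x) / (1 - x)) (2 / (1 - u) ^ 2) u := by
    have hnum : HasDerivAt (fun x : ℝ => 1 + x) 1 u := (hasDerivAt_id u).const_add 1
    have hden : HasDerivAt (fun x : ℝ => 1 - x) (-1) u := (hasDerivAt_id u).const_sub 1
    have := hnum.div hden hu1.ne'
    refine this.congr_deriv (Eq.symm ?_)
    field_simp
    ring
  have hpos : (0:ℝ) < (1 + u) / (1 - u) := div_pos hu2 hu1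
  have hlog := (hq.log hpos.ne').div_const 2
  have h12 : (1:ℝ) - u ^ 2 ≠ 0 := by nlinarith
  refine hlog.congr_deriv (Eq.symm ?_)
  field_simp
  ring

lemma sinh_cosh_artanh {u : ℝ} (h : |u| < 1) :
    Real.sinh (_root_.artanh u) * Real.cosh (_root_.artanh u) = u / (1 - u ^ 2) := by
  obtain ⟨h1, h2⟩ := abs_lt.mp h
  have hu1 : (0:ℝ) < 1 - u := by linarith
  have hu2 : (0:ℝ) < 1 + u := by linarith
  have hpos : (0:ℝ) < (1 + u) / (1 - u) := div_pos hu2 hu1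
  have h2a : 2 * _root_.artanh u = Real.log ((1 + u) / (1 - u)) := by rw [_root_.artanh]; ring
  have key : Real.sinh (_root_.artanh u) * Real.cosh (_root_.artanh u)
      = Real.sinh (2 * _root_.artanh u) / 2 := by rw [Real.sinh_two_mul]; ring
  have h12 : (1:ℝ) - u ^ 2 ≠ 0 := by nlinarith
  rw [key, h2a, Real.sinh_log hpos, inv_div]
  field_simp
  ring

lemma artanh_le_artanh {u v : ℝ} (hu : -1 < u) (huv : u ≤ v) (hv : v < 1) :
    _root_.artanh u ≤ _root_.artanh v := by
  have hu1 : (0:ℝ) < 1 - u := by linarith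
  have hv1 : (0:ℝ) < 1 - v := by linarith
  have hu2 : (0:ℝ) < 1 + u := by linarith
  have hv2 : (0:ℝ) < 1 + v := by linarith
  have hmono : (1 + u) / (1 - u) ≤ (1 + v) / (1 - v) := by
    rw [div_le_div_iff₀ hu1 hv1]; nlinarith
  have := Real.log_le_log (div_pos hu2 hu1) hmono
  rw [_root_.artanh, _root_.artanh]
  linarith

lemma tanh_lt_one (x : ℝ) : Real.tanh x < 1 := by
  rw [Real.tanh_eq_sinh_div_cosh]
  exact div_lt_one (Real.cosh_pos x) |>.mpr (Real.sinh_lt_cosh x)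

lemma tanh_pos {x : ℝ} (hx : 0 < x) : 0 < Real.tanh x := by
  rw [Real.tanh_eq_sinh_div_cosh]
  exact div_pos (Real.sinh_pos_iff.mpr hx) (Real.cosh_pos x)

lemma hasDerivAt_tanh (t : ℝ) : HasDerivAt Real.tanh (1 / Real.cosh t ^ 2) t := by
  have hc := (Real.cosh_pos t).ne'
  have h := (Real.hasDerivAt_sinh t).div (Real.hasDerivAt_cosh t) hc
  have hfun : (fun x => Real.sinh x / Real.cosh x) = Real.tanh := by
    funext x; rw [Real.tanh_eq_sinh_div_cosh]
  rw [show Real.sinh / Real.cosh = Real.tanh from hfun] at h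
  refine h.congr_deriv (Eq.symm ?_)
  have := Real.cosh_sq_sub_sinh_sq t
  field_simp
  nlinarith

lemma tanh_strictMono : StrictMono Real.tanh := by
  apply strictMono_of_deriv_pos
  intro x
  rw [(hasDerivAt_tanh x).deriv]
  positivity


/-- Antiderivative of `cosh²`. -/
noncomputable def F (w : ℝ) : ℝ := (w + Real.sinh w * Real.cosh w) / 2

noncomputable def psi (k t : ℝ) : ℝ := _root_.artanh (k * Real.sinh t)

noncomputable def XS (r t : ℝ) : ℝ := Real.arsinh (r * Real.tanh t)

noncomputable def XS' (sa tb t : ℝ) : ℝ :=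
  sa / (Real.cosh t * Real.sqrt (tb ^ 2 * Real.cosh t ^ 2 + sa ^ 2 * Real.sinh t ^ 2))

noncomputable def HH (k t : ℝ) : ℝ := ∫ y in (0:ℝ)..t, F (psi k y) * Real.cosh y

lemma hasDerivAt_F (w : ℝ) : HasDerivAt F (Real.cosh w ^ 2) w := by
  have h1 := ((Real.hasDerivAt_sinh w).mul (Real.hasDerivAt_cosh w)).const_add 0
  have h2 := ((hasDerivAt_id w).add ((Real.hasDerivAt_sinh w).mul (Real.hasDerivAt_cosh w))).div_const 2
  refine h2.congr_deriv (Eq.symm ?_)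
  have := Real.cosh_sq_sub_sinh_sq w
  nlinarith

lemma continuous_F : Continuous F := by
  unfold F
  continuity

lemma integral_cosh_sq (w : ℝ) : (∫ z in (0:ℝ)..w, Real.cosh z ^ 2) = F w := by
  have h := integral_eq_sub_of_hasDerivAt (f := F) (f' := fun z => Real.cosh z ^ 2)
    (fun z _ => hasDerivAt_F z) (Continuous.intervalIntegrable (by continuity) 0 w)
  rw [h]
  simp [F]

lemma hasDerivAt_psi (k : ℝ) {t : ℝ} (h : |k * Real.sinh t| < 1) :
    HasDerivAt (psi k) (k * Real.cosh t / (1 - (k * Real.sinh t) ^ 2)) t := by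
  have h1 : HasDerivAt (fun t => k * Real.sinh t) (k * Real.cosh t) t :=
    (Real.hasDerivAt_sinh t).const_mul k
  have h2 := (hasDerivAt_artanh h).comp t h1
  refine h2.congr_deriv (Eq.symm ?_)
  ring

lemma hasDerivAt_XS {sa tb : ℝ} (hsa : 0 < sa) (htb : 0 < tb) (t : ℝ) :
    HasDerivAt (XS (sa / tb)) (XS' sa tb t) t := by
  have hct := Real.cosh_pos t
  have h1 : HasDerivAt (fun t => sa / tb * Real.tanh t) (sa / tb * (1 / Real.cosh t ^ 2)) t :=
    (hasDerivAt_tanh t).const_mul _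
  have h2 := (Real.hasDerivAt_arsinh _).comp t h1
  have hD : 0 < tb ^ 2 * Real.cosh t ^ 2 + sa ^ 2 * Real.sinh t ^ 2 := by positivity
  have hsq : 1 + (sa / tb * Real.tanh t) ^ 2
      = (tb ^ 2 * Real.cosh t ^ 2 + sa ^ 2 * Real.sinh t ^ 2) / (tb * Real.cosh t) ^ 2 := by
    rw [Real.tanh_eq_sinh_div_cosh]
    field_simp
  have hsqrt : Real.sqrt (1 + (sa / tb * Real.tanh t) ^ 2)
      = Real.sqrt (tb ^ 2 * Real.cosh t ^ 2 + sa ^ 2 * Real.sinh t ^ 2) / (tb * Real.cosh t) := by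
    rw [hsq, Real.sqrt_div hD.le, Real.sqrt_sq (by positivity)]
  refine h2.congr_deriv (Eq.symm ?_)
  rw [hsqrt, XS']
  have hsD : 0 < Real.sqrt (tb ^ 2 * Real.cosh t ^ 2 + sa ^ 2 * Real.sinh t ^ 2) :=
    Real.sqrt_pos.mpr hD
  rw [inv_div]
  field_simp

lemma continuous_XS' (sa tb : ℝ) (htb : 0 < tb) : Continuous (XS' sa tb) := by
  unfold XS'
  apply Continuous.div continuous_const
  · exact Real.continuous_cosh.mul (Real.continuous_sqrt.comp (by continuity))
  · intro t
    have hD : 0 < tb ^ 2 * Real.cosh t ^ 2 + sa ^ 2 * Real.sinh t ^ 2 := by positivity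
    have := Real.cosh_pos t
    have := Real.sqrt_pos.mpr hD
    positivity

end OrthoAux

open OrthoAux in
/-- Theorem 1 of the paper: the volume (curvature `k = 1`) of a hyperbolic orthosceme
with edge lengths `a`, `b`, `c` (edge `a ⊥ b`, edge `c ⊥ plane(a,b)`), expressed in
hyperbolic orthogonal coordinates as a triple integral, equals the single integral on
the right. -/
theorem orthosceme_volume (a b c : ℝ) (ha : 0 < a) (hb : 0 < b) (hc : 0 < c) :
    (∫ x in (0:ℝ)..a,
        ∫ y in (0:ℝ)..(_root_.artanh ((Real.tanh b / Real.sinh a) * Real.sinh x)),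
          ∫ z in (0:ℝ)..(_root_.artanh ((Real.tanh c / Real.sinh b) * Real.sinh y)),
            Real.cosh z ^ 2 * Real.cosh y) =
      (1 / 4) * ∫ l in (0:ℝ)..b,
        (Real.tanh l * Real.sinh a /
            Real.sqrt (Real.tanh b ^ 2 * Real.cosh l ^ 2 + Real.sinh a ^ 2 * Real.sinh l ^ 2)) *
          Real.log ((Real.sinh b + Real.tanh c * Real.sinh l) /
            (Real.sinh b - Real.tanh c * Real.sinh l)) := by
  set sa := Real.sinh a with hsa'
  set sb := Real.sinh b with hsb'
  set tb := Real.tanh b with htb'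
  set tc := Real.tanh c with htc'
  set k := tc / sb with hk
  set m := tb / sa with hm
  set r := sa / tb with hr
  have hsa : 0 < sa := Real.sinh_pos_iff.mpr ha
  have hsb : 0 < sb := Real.sinh_pos_iff.mpr hb
  have htb0 : 0 < tb := tanh_pos hb
  have htc0 : 0 < tc := tanh_pos hc
  have htb1 : tb < 1 := OrthoAux.tanh_lt_one b
  have htc1 : tc < 1 := OrthoAux.tanh_lt_one c
  have hk0 : 0 < k := div_pos htc0 hsb
  have hm0 : 0 < m := div_pos htb0 hsa
  have hksb : k * sb = tc := div_mul_cancel₀ _ hsb.ne'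
  have hmsa : m * sa = tb := div_mul_cancel₀ _ hsa.ne'
  -- bounds
  have hkmem : ∀ t ∈ Set.Icc (0:ℝ) b, |k * Real.sinh t| < 1 := by
    intro t ht
    rw [abs_of_nonneg (mul_nonneg hk0.le (Real.sinh_nonneg_iff.mpr ht.1))]
    calc k * Real.sinh t ≤ k * sb :=
          mul_le_mul_of_nonneg_left (Real.sinh_le_sinh.mpr ht.2) hk0.le
      _ = tc := hksb
      _ < 1 := htc1
  have hmmem : ∀ x ∈ Set.Icc (0:ℝ) a, |m * Real.sinh x| < 1 := by
    intro x hx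
    rw [abs_of_nonneg (mul_nonneg hm0.le (Real.sinh_nonneg_iff.mpr hx.1))]
    calc m * Real.sinh x ≤ m * sa :=
          mul_le_mul_of_nonneg_left (Real.sinh_le_sinh.mpr hx.2) hm0.le
      _ = tb := hmsa
      _ < 1 := htb1
  -- open set where `psi k` is differentiable
  set U : Set ℝ := {y | |k * Real.sinh y| < 1} with hU
  have hUopen : IsOpen U :=
    isOpen_lt ((continuous_const.mul Real.continuous_sinh).abs) continuous_const
  have hIccU : Set.Icc (0:ℝ) b ⊆ U := fun t ht => hkmem t ht
  -- the basic integrand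
  have hgc : ∀ y ∈ U, ContinuousAt (fun y => F (psi k y) * Real.cosh y) y := by
    intro y hy
    exact ((continuous_F.continuousAt).comp
      ((hasDerivAt_psi k hy).continuousAt)).mul Real.continuous_cosh.continuousAt
  have hgcontOn : ContinuousOn (fun y => F (psi k y) * Real.cosh y) U :=
    fun y hy => (hgc y hy).continuousWithinAt
  -- FTC helper on [0, b]
  have hFTC : ∀ φ : ℝ → ℝ, ContinuousOn φ U → ∀ t ∈ Set.Icc (0:ℝ) b,
      HasDerivAt (fun s => ∫ u in (0:ℝ)..s, φ u) (φ t) t := by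
    intro φ hφ t ht
    apply intervalIntegral.integral_hasDerivAt_right
    · apply ContinuousOn.intervalIntegrable
      apply hφ.mono
      intro y hy
      apply hIccU
      rw [Set.uIcc_of_le ht.1] at hy
      exact ⟨hy.1, hy.2.trans ht.2⟩
    · exact hφ.stronglyMeasurableAtFilter hUopen t (hIccU ht)
    · exact hφ.continuousAt (hUopen.mem_nhds (hIccU ht))
  have hHHd : ∀ t ∈ Set.Icc (0:ℝ) b, HasDerivAt (HH k) (F (psi k t) * Real.cosh t) t :=
    fun t ht => hFTC _ hgcontOn t ht
  have hHHcont : ContinuousOn (HH k) (Set.Icc (0:ℝ) b) := by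
    have hint : IntegrableOn (fun y => F (psi k y) * Real.cosh y) (Set.uIcc (0:ℝ) b) volume := by
      rw [Set.uIcc_of_le hb.le]
      exact (hgcontOn.mono hIccU).integrableOn_Icc
    have := intervalIntegral.continuousOn_primitive_interval hint
    rw [Set.uIcc_of_le hb.le] at this
    exact this
  have hHH0 : HH k 0 = 0 := intervalIntegral.integral_same
  -- Step 1 : compute the innermost integral
  have hinner : ∀ x : ℝ,
      (∫ y in (0:ℝ)..(_root_.artanh (m * Real.sinh x)),
        ∫ z in (0:ℝ)..(_root_.artanh (k * Real.sinh y)), Real.cosh z ^ 2 * Real.cosh y)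
      = HH k (psi m x) := by
    intro x
    rw [HH, psi]
    apply intervalIntegral.integral_congr
    intro y _
    show (∫ z in (0:ℝ)..(_root_.artanh) (k * Real.sinh y), Real.cosh z ^ 2 * Real.cosh y)
      = F (psi k y) * Real.cosh y
    rw [intervalIntegral.integral_mul_const, integral_cosh_sq]
    rfl
  have h1 : (∫ x in (0:ℝ)..a,
      ∫ y in (0:ℝ)..(_root_.artanh (m * Real.sinh x)),
        ∫ z in (0:ℝ)..(_root_.artanh (k * Real.sinh y)), Real.cosh z ^ 2 * Real.cosh y)
      = ∫ x in (0:ℝ)..a, HH k (psi m x) :=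
    intervalIntegral.integral_congr fun x _ => hinner x
  -- facts about the substitution XS
  have hXS0 : XS r 0 = 0 := by simp [XS]
  have hXSb : XS r b = a := by
    rw [XS, hr, ← htb', div_mul_cancel₀ _ htb0.ne', hsa', Real.arsinh_sinh]
  have hXSd : ∀ t, HasDerivAt (XS r) (XS' sa tb t) t := by
    rw [hr]
    exact fun t => hasDerivAt_XS hsa htb0 t
  have hXScont : Continuous (XS r) :=
    continuous_iff_continuousAt.mpr fun t => (hXSd t).continuousAt
  have hXSmono : Monotone (XS r) := fun s t hst =>
    Real.arsinh_le_arsinh.mpr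
      (mul_le_mul_of_nonneg_left (tanh_strictMono.monotone hst) (by positivity))
  have hpsiXS : ∀ t, psi m (XS r t) = t := by
    intro t
    rw [psi, XS, Real.sinh_arsinh]
    have hmr : m * (r * Real.tanh t) = Real.tanh t := by
      rw [hm, hr]
      field_simp
    rw [hmr, OrthoAux.artanh_tanh]
  have himg : XS r '' Set.uIcc (0:ℝ) b ⊆ Set.Icc 0 a := by
    rw [Set.uIcc_of_le hb.le]
    rintro x ⟨t, ht, rfl⟩
    exact ⟨hXS0 ▸ hXSmono ht.1, hXSb ▸ hXSmono ht.2⟩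
  -- continuity of x ↦ HH k (psi m x) on [0, a]
  have hpsim_cont : ContinuousOn (fun x => psi m x) (Set.Icc (0:ℝ) a) :=
    fun x hx => ((hasDerivAt_psi m (hmmem x hx)).continuousAt).continuousWithinAt
  have hpsim_maps : Set.MapsTo (psi m) (Set.Icc (0:ℝ) a) (Set.Icc (0:ℝ) b) := by
    intro x hx
    have hxx := hmmem x hx
    obtain ⟨hxl, hxr⟩ := abs_lt.mp hxx
    have hnn : 0 ≤ m * Real.sinh x := mul_nonneg hm0.le (Real.sinh_nonneg_iff.mpr hx.1)
    constructor
    · rw [psi, ← OrthoAux.artanh_zero]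
      exact OrthoAux.artanh_le_artanh (by norm_num) hnn hxr
    · have hle : m * Real.sinh x ≤ tb := by
        calc m * Real.sinh x ≤ m * sa :=
              mul_le_mul_of_nonneg_left (Real.sinh_le_sinh.mpr hx.2) hm0.le
          _ = tb := hmsa
      have := artanh_le_artanh hxl hle htb1
      rw [htb', OrthoAux.artanh_tanh] at this
      exact this
  have hggcont : ContinuousOn (fun x => HH k (psi m x)) (Set.Icc (0:ℝ) a) :=
    hHHcont.comp hpsim_cont hpsim_maps
  -- Step 2 : substitution x = XS r t
  have h2 : (∫ x in (0:ℝ)..a, HH k (psi m x))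
      = ∫ t in (0:ℝ)..b, XS' sa tb t * HH k t := by
    have h := intervalIntegral.integral_comp_smul_deriv' (f := XS r) (f' := XS' sa tb)
      (g := fun x => HH k (psi m x)) (a := 0) (b := b)
      (fun t _ => hXSd t) ((continuous_XS' sa tb htb0).continuousOn) (hggcont.mono himg)
    rw [hXS0, hXSb] at h
    rw [← h]
    apply intervalIntegral.integral_congr
    intro t _
    simp only [Function.comp, smul_eq_mul]
    rw [hpsiXS t]
  -- Step 3 : integration by parts
  have hgfun_contOn : ContinuousOn (fun u => (a - XS r u) * (F (psi k u) * Real.cosh u)) U :=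
    ((continuous_const.sub hXScont).continuousOn).mul hgcontOn
  have h3 : (∫ t in (0:ℝ)..b, XS' sa tb t * HH k t)
      = ∫ t in (0:ℝ)..b, (a - XS r t) * (F (psi k t) * Real.cosh t) := by
    set S : ℝ → ℝ := fun t => (XS r t - a) * HH k t
      + ∫ u in (0:ℝ)..t, (a - XS r u) * (F (psi k u) * Real.cosh u) with hS
    have hderiv : ∀ t ∈ Set.uIcc (0:ℝ) b, HasDerivAt S (XS' sa tb t * HH k t) t := by
      intro t ht
      rw [Set.uIcc_of_le hb.le] at ht
      have hd1 : HasDerivAt (fun t => XS r t - a) (XS' sa tb t) t := (hXSd t).sub_const a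
      have hd2 := (hd1.mul (hHHd t ht)).add (hFTC _ hgfun_contOn t ht)
      refine hd2.congr_deriv (Eq.symm ?_)
      ring
    have hint : IntervalIntegrable (fun t => XS' sa tb t * HH k t) volume 0 b := by
      apply ContinuousOn.intervalIntegrable
      rw [Set.uIcc_of_le hb.le]
      exact ((continuous_XS' sa tb htb0).continuousOn).mul hHHcont
    have heq := intervalIntegral.integral_eq_sub_of_hasDerivAt hderiv hint
    rw [heq, hS]
    simp only
    rw [hXSb, hXS0, hHH0, intervalIntegral.integral_same]
    ring
  -- the pointwise identity used in Step 4
  have hpsi_d : ∀ t ∈ Set.Icc (0:ℝ) b,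
      HasDerivAt (psi k) (k * Real.cosh t / (1 - (k * Real.sinh t) ^ 2)) t :=
    fun t ht => hasDerivAt_psi k (hkmem t ht)
  -- Step 4 : second integration by parts
  have hpsicontOn : ContinuousOn (psi k) (Set.Icc (0:ℝ) b) :=
    fun t ht => ((hpsi_d t ht).continuousAt).continuousWithinAt
  have h4 : (∫ t in (0:ℝ)..b, (a - XS r t) * (F (psi k t) * Real.cosh t))
      = ∫ t in (0:ℝ)..b, (1/2) * (Real.sinh t * XS' sa tb t * psi k t) := by
    set R : ℝ → ℝ := fun t => 1/2 * ((a - XS r t) * (Real.sinh t * psi k t)) with hR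
    have hderiv : ∀ t ∈ Set.uIcc (0:ℝ) b, HasDerivAt R
        ((a - XS r t) * (F (psi k t) * Real.cosh t)
          - 1/2 * (Real.sinh t * XS' sa tb t * psi k t)) t := by
      intro t ht
      rw [Set.uIcc_of_le hb.le] at ht
      have hu := hkmem t ht
      have hu2 : 1 - (k * Real.sinh t) ^ 2 ≠ 0 := by
        obtain ⟨hl, hrt⟩ := abs_lt.mp hu
        nlinarith
      have hd1 : HasDerivAt (fun t => a - XS r t) (-(XS' sa tb t)) t := (hXSd t).const_sub a
      have hd2 : HasDerivAt (fun t => Real.sinh t * psi k t)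
          (Real.cosh t * psi k t
            + Real.sinh t * (k * Real.cosh t / (1 - (k * Real.sinh t) ^ 2))) t :=
        (Real.hasDerivAt_sinh t).mul (hasDerivAt_psi k hu)
      have hd3 := (hd1.mul hd2).const_mul (1/2 : ℝ)
      refine hd3.congr_deriv (Eq.symm ?_)
      simp only [F, psi]
      rw [sinh_cosh_artanh hu]
      field_simp
      ring
    have hintegr1 : IntervalIntegrable
        (fun t => (a - XS r t) * (F (psi k t) * Real.cosh t)) volume 0 b := by
      apply ContinuousOn.intervalIntegrable
      rw [Set.uIcc_of_le hb.le]
      exact hgfun_contOn.mono hIccU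
    have hintegr2 : IntervalIntegrable
        (fun t => (1/2) * (Real.sinh t * XS' sa tb t * psi k t)) volume 0 b := by
      apply ContinuousOn.intervalIntegrable
      rw [Set.uIcc_of_le hb.le]
      exact continuous_const.continuousOn.mul
        (((Real.continuous_sinh.continuousOn.mul
          (continuous_XS' sa tb htb0).continuousOn)).mul hpsicontOn)
    have h0 := intervalIntegral.integral_eq_sub_of_hasDerivAt hderiv (hintegr1.sub hintegr2)
    rw [intervalIntegral.integral_sub hintegr1 hintegr2] at h0
    have hRb : R b = 0 := by
      rw [hR]
      simp only
      rw [hXSb]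
      ring
    have hR0 : R 0 = 0 := by
      rw [hR]
      simp [Real.sinh_zero]
    rw [hRb, hR0] at h0
    linarith
  -- Step 5 : identify the right-hand side integrand
  have hdivdiv : ∀ p q s : ℝ, s ≠ 0 → p / s / (q / s) = p / q := by
    intro p q s hs
    rcases eq_or_ne q 0 with hq | hq
    · simp [hq]
    · field_simp
  have hpoint : ∀ t ∈ Set.uIcc (0:ℝ) b,
      (Real.tanh t * sa / Real.sqrt (tb ^ 2 * Real.cosh t ^ 2 + sa ^ 2 * Real.sinh t ^ 2)) *
        Real.log ((sb + tc * Real.sinh t) / (sb - tc * Real.sinh t))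
      = 2 * (Real.sinh t * XS' sa tb t * psi k t) := by
    intro t ht
    rw [Set.uIcc_of_le hb.le] at ht
    have hu := hkmem t ht
    have hD : 0 < tb ^ 2 * Real.cosh t ^ 2 + sa ^ 2 * Real.sinh t ^ 2 := by
      have := Real.cosh_pos t
      positivity
    have hsD := Real.sqrt_pos.mpr hD
    have hct := Real.cosh_pos t
    have hlog : Real.log ((sb + tc * Real.sinh t) / (sb - tc * Real.sinh t)) = 2 * psi k t := by
      have e1 : 1 + k * Real.sinh t = (sb + tc * Real.sinh t) / sb := by
        rw [hk]; field_simp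
      have e2 : 1 - k * Real.sinh t = (sb - tc * Real.sinh t) / sb := by
        rw [hk]; field_simp
      rw [psi, _root_.artanh, e1, e2, hdivdiv _ _ _ hsb.ne']
      ring
    have htanh : Real.tanh t * sa
        / Real.sqrt (tb ^ 2 * Real.cosh t ^ 2 + sa ^ 2 * Real.sinh t ^ 2)
        = Real.sinh t * XS' sa tb t := by
      rw [Real.tanh_eq_sinh_div_cosh, XS']
      field_simp
    rw [hlog, htanh]
    ring
  -- put everything together
  rw [h1, h2, h3, h4, intervalIntegral.integral_const_mul]
  rw [intervalIntegral.integral_congr hpoint, intervalIntegral.integral_const_mul]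
  ring
end

section
/- Let b, c > 0 and 0 ≤ L ≤ b be real numbers. Then ∫_0^L ∫_0^{artanh((tanh(c)/sinh(b))·sinh(y))} cosh²(z) · cosh(y) dz dy = (1/4) · sinh(L) · log((sinh(b) + tanh(c)·sinh(L)) / (sinh(b) − tanh(c)·sinh(L))). -/
open MeasureTheory Real intervalIntegral

lemma artanh_hasDerivAt {t : ℝ} (h1 : -1 < t) (h2 : t < 1) :
    HasDerivAt _root_.artanh (1 / (1 - t ^ 2)) t := by
  have hsq : (1 : ℝ) - t ^ 2 ≠ 0 := by nlinarith
  have hA : HasDerivAt (fun x : ℝ => (Real.log (1 + x) - Real.log (1 - x)) / 2)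
      (1 / (1 - t ^ 2)) t := by
    have hp : (1 : ℝ) + t ≠ 0 := by linarith
    have hm : (1 : ℝ) - t ≠ 0 := by linarith
    have h1' : HasDerivAt (fun x : ℝ => Real.log (1 + x)) (1 / (1 + t)) t := by
      have := ((hasDerivAt_id t).const_add 1).log hp
      simpa using this
    have h2' : HasDerivAt (fun x : ℝ => Real.log (1 - x)) (-1 / (1 - t)) t := by
      have := ((hasDerivAt_id t).const_sub 1).log hm
      simpa using this
    have := (h1'.sub h2').div_const 2
    refine this.congr_deriv ?_
    field_simp
    ring
  apply hA.congr_of_eventuallyEq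
  filter_upwards [Ioo_mem_nhds h1 h2] with x hx
  obtain ⟨hx1, hx2⟩ := hx
  have hp : (1 : ℝ) + x ≠ 0 := by linarith
  have hm : (1 : ℝ) - x ≠ 0 := by linarith
  unfold _root_.artanh
  rw [Real.log_div hp hm]

lemma sinh_cosh_artanh {t : ℝ} (h1 : -1 < t) (h2 : t < 1) :
    Real.sinh (_root_.artanh t) * Real.cosh (_root_.artanh t) = t / (1 - t ^ 2) := by
  have hp : (0 : ℝ) < 1 + t := by linarith
  have hm : (0 : ℝ) < 1 - t := by linarith
  have hsq : (1 : ℝ) - t ^ 2 ≠ 0 := by nlinarith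
  have hr : (0 : ℝ) < (1 + t) / (1 - t) := div_pos hp hm
  set A := _root_.artanh t with hA
  have hE2 : Real.exp A ^ 2 = (1 + t) / (1 - t) := by
    rw [← Real.exp_nat_mul, hA]
    unfold _root_.artanh
    rw [show (2 : ℕ) * (Real.log ((1 + t) / (1 - t)) / 2) = Real.log ((1 + t) / (1 - t)) by
      push_cast; ring]
    exact Real.exp_log hr
  have hEpos : (0 : ℝ) < Real.exp A := Real.exp_pos A
  have key : Real.sinh A * Real.cosh A = (Real.exp A ^ 2 - (Real.exp A ^ 2)⁻¹) / 4 := by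
    rw [Real.sinh_eq, Real.cosh_eq, Real.exp_neg]
    field_simp
    ring
  rw [key, hE2]
  field_simp
  ring

lemma integral_cosh_sq (A : ℝ) :
    ∫ z in (0:ℝ)..A, Real.cosh z ^ 2 = (A + Real.sinh A * Real.cosh A) / 2 := by
  have h : ∀ z ∈ Set.uIcc (0:ℝ) A,
      HasDerivAt (fun x => (x + Real.sinh x * Real.cosh x) / 2) (Real.cosh z ^ 2) z := by
    intro z _
    have := ((hasDerivAt_id z).add
      ((Real.hasDerivAt_sinh z).mul (Real.hasDerivAt_cosh z))).div_const 2
    refine this.congr_deriv ?_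
    nlinarith [Real.cosh_sq (x := z)]
  have := intervalIntegral.integral_eq_sub_of_hasDerivAt h
    ((Real.continuous_cosh.pow 2).intervalIntegrable 0 A)
  simpa using this

/-- The key inner double-integral computation in the proof of the orthosceme volume
formula (Theorem 1). -/
theorem orthosceme_inner_double_integral (b c L : ℝ) (hb : 0 < b) (hc : 0 < c)
    (hL0 : 0 ≤ L) (hLb : L ≤ b) :
    (∫ y in (0:ℝ)..L,
        ∫ z in (0:ℝ)..(_root_.artanh ((Real.tanh c / Real.sinh b) * Real.sinh y)),
          Real.cosh z ^ 2 * Real.cosh y) =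
      (1 / 4) * Real.sinh L *
        Real.log ((Real.sinh b + Real.tanh c * Real.sinh L) /
          (Real.sinh b - Real.tanh c * Real.sinh L)) := by
  set k := Real.tanh c / Real.sinh b with hk
  have hsb : 0 < Real.sinh b := Real.sinh_pos_iff.mpr hb
  have htc0 : 0 < Real.tanh c := by
    rw [Real.tanh_eq_sinh_div_cosh]
    exact div_pos (Real.sinh_pos_iff.mpr hc) (Real.cosh_pos c)
  have htc1 : Real.tanh c < 1 := by
    rw [Real.tanh_eq_sinh_div_cosh, div_lt_one (Real.cosh_pos c)]
    exact Real.sinh_lt_cosh c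
  have hk0 : 0 < k := div_pos htc0 hsb
  have hbound : ∀ y ∈ Set.Icc (0:ℝ) L, 0 ≤ k * Real.sinh y ∧ k * Real.sinh y < 1 := by
    intro y hy
    have hy0 : 0 ≤ Real.sinh y := by
      rw [← Real.sinh_zero]; exact Real.sinh_le_sinh.mpr hy.1
    have hyb : Real.sinh y ≤ Real.sinh b :=
      Real.sinh_le_sinh.mpr (hy.2.trans hLb)
    constructor
    · positivity
    · rw [hk, div_mul_eq_mul_div, div_lt_one hsb]
      nlinarith
  have huIcc : Set.uIcc (0:ℝ) L = Set.Icc 0 L := Set.uIcc_of_le hL0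
  set g : ℝ → ℝ := fun y =>
    Real.cosh y * (_root_.artanh (k * Real.sinh y) +
      (k * Real.sinh y) / (1 - (k * Real.sinh y) ^ 2)) / 2 with hg
  have heq : ∀ y ∈ Set.uIcc (0:ℝ) L,
      (∫ z in (0:ℝ)..(_root_.artanh (k * Real.sinh y)), Real.cosh z ^ 2 * Real.cosh y) = g y := by
    intro y hy
    rw [huIcc] at hy
    obtain ⟨ht0, ht1⟩ := hbound y hy
    rw [intervalIntegral.integral_mul_const, integral_cosh_sq,
      sinh_cosh_artanh (by linarith) ht1, hg]
    ring
  rw [intervalIntegral.integral_congr heq]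
  have hderiv : ∀ y ∈ Set.uIcc (0:ℝ) L,
      HasDerivAt (fun x => Real.sinh x * _root_.artanh (k * Real.sinh x) / 2) (g y) y := by
    intro y hy
    rw [huIcc] at hy
    obtain ⟨ht0, ht1⟩ := hbound y hy
    have hin : HasDerivAt (fun x => k * Real.sinh x) (k * Real.cosh y) y :=
      (Real.hasDerivAt_sinh y).const_mul k
    have hart : HasDerivAt (fun x => _root_.artanh (k * Real.sinh x))
        (1 / (1 - (k * Real.sinh y) ^ 2) * (k * Real.cosh y)) y :=
      (artanh_hasDerivAt (t := k * Real.sinh y) (by linarith) ht1).comp (h := fun x => k * Real.sinh x) y hin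
    have := (((Real.hasDerivAt_sinh y).mul hart).div_const 2)
    refine this.congr_deriv ?_
    rw [hg]
    have hden : (1 : ℝ) - (k * Real.sinh y) ^ 2 ≠ 0 := by nlinarith
    field_simp
  have hcont : ContinuousOn g (Set.uIcc (0:ℝ) L) := by
    rw [huIcc, hg]
    have hc1 : ContinuousOn (fun y => k * Real.sinh y) (Set.Icc (0:ℝ) L) :=
      (continuous_const.mul Real.continuous_sinh).continuousOn
    have hden : ∀ y ∈ Set.Icc (0:ℝ) L, (1 : ℝ) - (k * Real.sinh y) ^ 2 ≠ 0 := by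
      intro y hy
      obtain ⟨ht0, ht1⟩ := hbound y hy
      nlinarith
    have hart : ContinuousOn (fun y => _root_.artanh (k * Real.sinh y)) (Set.Icc (0:ℝ) L) := by
      unfold _root_.artanh
      apply ContinuousOn.div_const
      apply ContinuousOn.log
      · exact ((continuousOn_const.add hc1).div (continuousOn_const.sub hc1)
          (fun y hy => by obtain ⟨h0, h1⟩ := hbound y hy; intro h; rw [sub_eq_zero] at h; linarith))
      · intro y hy
        obtain ⟨ht0, ht1⟩ := hbound y hy
        have hnum : (0:ℝ) < 1 + k * Real.sinh y := by linarith
        have hden' : (0:ℝ) < 1 - k * Real.sinh y := by linarith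
        positivity
    exact ((Real.continuous_cosh.continuousOn.mul
      (hart.add (hc1.div (continuousOn_const.sub (hc1.pow 2)) hden))).div_const 2)
  rw [intervalIntegral.integral_eq_sub_of_hasDerivAt hderiv hcont.intervalIntegrable]
  simp only [Real.sinh_zero, zero_mul, mul_zero]
  have hsL0 : 0 ≤ Real.sinh L := by
    rw [← Real.sinh_zero]; exact Real.sinh_le_sinh.mpr hL0
  have hsLb : Real.sinh L ≤ Real.sinh b := Real.sinh_le_sinh.mpr hLb
  have hden : 0 < Real.sinh b - Real.tanh c * Real.sinh L := by nlinarith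
  have hkL1 : k * Real.sinh L < 1 := by
    rw [hk, div_mul_eq_mul_div, div_lt_one hsb]; nlinarith
  have h1ne : (1 : ℝ) - k * Real.sinh L ≠ 0 := by linarith
  have harg : (1 + k * Real.sinh L) / (1 - k * Real.sinh L) =
      (Real.sinh b + Real.tanh c * Real.sinh L) /
        (Real.sinh b - Real.tanh c * Real.sinh L) := by
    rw [div_eq_div_iff h1ne hden.ne', hk]
    field_simp
  unfold _root_.artanh
  rw [harg]
  ring
end

section
/- Let b, c > 0 and 0 ≤ L ≤ b be real numbers. Then ∫_0^L sinh( log((sinh(b) + tanh(c)·sinh(y)) / (sinh(b) − tanh(c)·sinh(y))) ) · cosh(y) dy = −(sinh(b)/tanh(c)) · log(1 − (tanh²(c)/sinh²(b)) · sinh²(L)). -/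
open MeasureTheory Real intervalIntegral

/-- The 'second integral' (denoted II) evaluated in the proof of the orthosceme
volume formula (Theorem 1). -/
theorem orthosceme_second_integral (b c L : ℝ) (hb : 0 < b) (hc : 0 < c)
    (hL0 : 0 ≤ L) (hLb : L ≤ b) :
    (∫ y in (0:ℝ)..L,
        Real.sinh (Real.log ((Real.sinh b + Real.tanh c * Real.sinh y) /
            (Real.sinh b - Real.tanh c * Real.sinh y))) * Real.cosh y) =
      -(Real.sinh b / Real.tanh c) *
        Real.log (1 - (Real.tanh c ^ 2 / Real.sinh b ^ 2) * Real.sinh L ^ 2) := by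
  set S := Real.sinh b with hSdef
  set t := Real.tanh c with htdef
  have hS : 0 < S := Real.sinh_pos_iff.mpr hb
  have hcosh : 0 < Real.cosh c := Real.cosh_pos c
  have ht : 0 < t := by
    rw [htdef, Real.tanh_eq_sinh_div_cosh]
    exact div_pos (Real.sinh_pos_iff.mpr hc) hcosh
  have ht1 : t < 1 := by
    rw [htdef, Real.tanh_eq_sinh_div_cosh, div_lt_one hcosh]
    nlinarith [Real.sinh_lt_cosh c]
  have huIcc : Set.uIcc (0:ℝ) L = Set.Icc 0 L := Set.uIcc_of_le hL0
  have hmem : ∀ y ∈ Set.Icc (0:ℝ) L,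
      0 ≤ Real.sinh y ∧ t * Real.sinh y < S := by
    rintro y ⟨hy0, hyL⟩
    have hs0 : 0 ≤ Real.sinh y := Real.sinh_nonneg_iff.mpr hy0
    have hsb : Real.sinh y ≤ S := Real.sinh_le_sinh.mpr (hyL.trans hLb)
    refine ⟨hs0, ?_⟩
    calc t * Real.sinh y ≤ t * S := by nlinarith
      _ < 1 * S := by nlinarith
      _ = S := one_mul S
  have hden : ∀ y ∈ Set.Icc (0:ℝ) L, 0 < S ^ 2 - t ^ 2 * Real.sinh y ^ 2 := by
    intro y hy
    obtain ⟨hs0, hlt⟩ := hmem y hy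
    nlinarith [mul_nonneg ht.le hs0]
  -- pointwise identity
  have hpt : ∀ y ∈ Set.Icc (0:ℝ) L,
      Real.sinh (Real.log ((S + t * Real.sinh y) / (S - t * Real.sinh y))) *
        Real.cosh y
      = 2 * S * t * Real.sinh y * Real.cosh y / (S ^ 2 - t ^ 2 * Real.sinh y ^ 2) := by
    intro y hy
    obtain ⟨hs0, hlt⟩ := hmem y hy
    have h1 : 0 < S + t * Real.sinh y := by nlinarith [mul_nonneg ht.le hs0]
    have h2 : 0 < S - t * Real.sinh y := by linarith
    have hd := hden y hy
    rw [Real.sinh_log (div_pos h1 h2)]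
    field_simp
    ring
  rw [intervalIntegral.integral_congr (g := fun y =>
      2 * S * t * Real.sinh y * Real.cosh y / (S ^ 2 - t ^ 2 * Real.sinh y ^ 2))
      (by intro y hy; rw [huIcc] at hy; exact hpt y hy)]
  have hF : ∀ y ∈ Set.Icc (0:ℝ) L,
      HasDerivAt (fun y => -(S / t) * Real.log (1 - t ^ 2 / S ^ 2 * Real.sinh y ^ 2))
        (2 * S * t * Real.sinh y * Real.cosh y / (S ^ 2 - t ^ 2 * Real.sinh y ^ 2)) y := by
    intro y hy
    have hd := hden y hy
    have hg : 0 < 1 - t ^ 2 / S ^ 2 * Real.sinh y ^ 2 := by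
      rw [sub_pos, div_mul_eq_mul_div, div_lt_one (by positivity)]
      nlinarith
    have h1 : HasDerivAt (fun y => 1 - t ^ 2 / S ^ 2 * Real.sinh y ^ 2)
        (-(t ^ 2 / S ^ 2 * (2 * Real.sinh y ^ 1 * Real.cosh y))) y := by
      have := ((Real.hasDerivAt_sinh y).pow 2).const_mul (t ^ 2 / S ^ 2)
      simpa using (this.const_sub 1)
    have h2 := (h1.log hg.ne').const_mul (-(S / t))
    refine h2.congr_deriv ?_
    field_simp
  rw [intervalIntegral.integral_eq_sub_of_hasDerivAt
      (fun y hy => hF y (huIcc ▸ hy)) ?_]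
  · simp [Real.sinh_zero]
  · apply ContinuousOn.intervalIntegrable
    apply ContinuousOn.div
    · fun_prop
    · fun_prop
    · intro y hy
      exact (hden y (huIcc ▸ hy)).ne'
end

section
/- Let b, c > 0 and 0 ≤ L ≤ b be real numbers. Then ∫_0^L log((sinh(b) + tanh(c)·sinh(y)) / (sinh(b) − tanh(c)·sinh(y))) · cosh(y) dy = sinh(L) · log((sinh(b) + tanh(c)·sinh(L)) / (sinh(b) − tanh(c)·sinh(L))) + (sinh(b)/tanh(c)) · log(1 − (tanh²(c)/sinh²(b)) · sinh²(L)). -/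
open MeasureTheory Real intervalIntegral

/-- The 'first integral' evaluated via integration by parts in the proof of the
orthosceme volume formula (Theorem 1). -/
theorem orthosceme_first_integral (b c L : ℝ) (hb : 0 < b) (hc : 0 < c)
    (hL0 : 0 ≤ L) (hLb : L ≤ b) :
    (∫ y in (0:ℝ)..L,
        Real.log ((Real.sinh b + Real.tanh c * Real.sinh y) /
            (Real.sinh b - Real.tanh c * Real.sinh y)) * Real.cosh y) =
      Real.sinh L *
          Real.log ((Real.sinh b + Real.tanh c * Real.sinh L) /
            (Real.sinh b - Real.tanh c * Real.sinh L)) +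
        (Real.sinh b / Real.tanh c) *
          Real.log (1 - (Real.tanh c ^ 2 / Real.sinh b ^ 2) * Real.sinh L ^ 2) := by
  set S := Real.sinh b with hS
  set t := Real.tanh c with ht
  have hSpos : 0 < S := Real.sinh_pos_iff.mpr hb
  have htpos : 0 < t := by
    rw [ht, Real.tanh_eq_sinh_div_cosh]
    exact div_pos (Real.sinh_pos_iff.mpr hc) (Real.cosh_pos c)
  have ht1 : t < 1 := by
    rw [ht, Real.tanh_eq_sinh_div_cosh, div_lt_one (Real.cosh_pos c)]
    rw [Real.sinh_eq, Real.cosh_eq]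
    have := Real.exp_pos (-c)
    linarith
  -- key positivity facts for y in [0, L]
  have key : ∀ y ∈ Set.Icc (0:ℝ) L, 0 < S - t * Real.sinh y ∧ 0 < S + t * Real.sinh y := by
    intro y hy
    have hsy0 : 0 ≤ Real.sinh y := Real.sinh_nonneg_iff.mpr hy.1
    have hsyS : Real.sinh y ≤ S := Real.sinh_le_sinh.mpr (hy.2.trans hLb)
    have h1 : t * Real.sinh y < S :=
      calc t * Real.sinh y ≤ t * S := by nlinarith
        _ < S := by nlinarith
    constructor
    · linarith
    · positivity
  -- the antiderivative
  set F : ℝ → ℝ := fun y =>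
    Real.sinh y * (Real.log (S + t * Real.sinh y) - Real.log (S - t * Real.sinh y)) +
      (S / t) * Real.log (1 - t ^ 2 / S ^ 2 * Real.sinh y ^ 2) with hF
  have hderiv : ∀ y ∈ Set.Icc (0:ℝ) L,
      HasDerivAt F
        (Real.log ((S + t * Real.sinh y) / (S - t * Real.sinh y)) * Real.cosh y) y := by
    intro y hy
    obtain ⟨hneg, hpos⟩ := key y hy
    have hquad : 0 < 1 - t ^ 2 / S ^ 2 * Real.sinh y ^ 2 := by
      have : 0 < (S - t * Real.sinh y) * (S + t * Real.sinh y) := mul_pos hneg hpos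
      have hS2 : (0:ℝ) < S ^ 2 := by positivity
      rw [sub_pos, div_mul_eq_mul_div, div_lt_one hS2]
      nlinarith
    have hsy : HasDerivAt Real.sinh (Real.cosh y) y := Real.hasDerivAt_sinh y
    have h1 : HasDerivAt (fun y => Real.log (S + t * Real.sinh y))
        ((t * Real.cosh y) / (S + t * Real.sinh y)) y :=
      HasDerivAt.log ((hsy.const_mul t).const_add S) (ne_of_gt hpos)
    have h2 : HasDerivAt (fun y => Real.log (S - t * Real.sinh y))
        ((-(t * Real.cosh y)) / (S - t * Real.sinh y)) y :=
      HasDerivAt.log ((hsy.const_mul t).const_sub S) (ne_of_gt hneg)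
    have h3 : HasDerivAt (fun y => Real.log (1 - t ^ 2 / S ^ 2 * Real.sinh y ^ 2))
        ((-(t ^ 2 / S ^ 2 * (2 * Real.sinh y ^ 1 * Real.cosh y))) /
          (1 - t ^ 2 / S ^ 2 * Real.sinh y ^ 2)) y :=
      HasDerivAt.log (((hsy.pow 2).const_mul (t ^ 2 / S ^ 2)).const_sub 1) (ne_of_gt hquad)
    have htot := (hsy.mul (h1.sub h2)).add ((h3.const_mul (S / t)))
    refine HasDerivAt.congr_deriv htot ?_
    have hlogdiv : Real.log ((S + t * Real.sinh y) / (S - t * Real.sinh y)) =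
        Real.log (S + t * Real.sinh y) - Real.log (S - t * Real.sinh y) :=
      Real.log_div (ne_of_gt hpos) (ne_of_gt hneg)
    rw [hlogdiv]
    have hS0 : S ≠ 0 := ne_of_gt hSpos
    have ht0 : t ≠ 0 := ne_of_gt htpos
    have hz : Real.sinh y * ((t * Real.cosh y) / (S + t * Real.sinh y) -
          (-(t * Real.cosh y)) / (S - t * Real.sinh y)) +
        (S / t) * ((-(t ^ 2 / S ^ 2 * (2 * Real.sinh y ^ 1 * Real.cosh y))) /
          (1 - t ^ 2 / S ^ 2 * Real.sinh y ^ 2)) = 0 := by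
      have hq : (0:ℝ) < S ^ 2 - t ^ 2 * Real.sinh y ^ 2 := by nlinarith [mul_pos hneg hpos]
      have hquad' : 1 - t ^ 2 / S ^ 2 * Real.sinh y ^ 2 =
          (S ^ 2 - t ^ 2 * Real.sinh y ^ 2) / S ^ 2 := by
        field_simp
      rw [hquad', show S ^ 2 - t ^ 2 * Real.sinh y ^ 2 = (S + t * Real.sinh y) * (S - t * Real.sinh y) by ring]
      rw [div_sub_div _ _ hpos.ne' hneg.ne', div_div_eq_mul_div, ← mul_div_assoc, ← mul_div_assoc, ← add_div]
      rw [div_eq_zero_iff]; left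
      field_simp
      ring
    simp only [Pi.sub_apply]
    linarith [hz]
  have hcont : IntervalIntegrable
      (fun y => Real.log ((S + t * Real.sinh y) / (S - t * Real.sinh y)) * Real.cosh y)
      volume 0 L := by
    apply ContinuousOn.intervalIntegrable
    rw [Set.uIcc_of_le hL0]
    apply ContinuousOn.mul _ Real.continuous_cosh.continuousOn
    apply ContinuousOn.log
    · exact ContinuousOn.div
        (Continuous.continuousOn (by continuity))
        (Continuous.continuousOn (by continuity))
        (fun y hy => ne_of_gt (key y hy).1)
    · intro y hy
      exact ne_of_gt (div_pos (key y hy).2 (key y hy).1)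
  have := intervalIntegral.integral_eq_sub_of_hasDerivAt
    (fun y hy => hderiv y (by rwa [Set.uIcc_of_le hL0] at hy)) hcont
  rw [this]
  obtain ⟨hnegL, hposL⟩ := key L ⟨le_refl 0 |>.trans hL0, le_refl L⟩
  have hlogdivL : Real.log ((S + t * Real.sinh L) / (S - t * Real.sinh L)) =
      Real.log (S + t * Real.sinh L) - Real.log (S - t * Real.sinh L) :=
    Real.log_div (ne_of_gt hposL) (ne_of_gt hnegL)
  simp only [hF, Real.sinh_zero, mul_zero, zero_mul, zero_pow, ne_eq, OfNat.ofNat_ne_zero,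
    not_false_eq_true, sub_zero, Real.log_one, add_zero, zero_add, sub_zero, hlogdivL]
end

section
/- Let b, c > 0 be fixed real numbers. Then, as a → ∞, the quantity (1/4)·∫_0^b (tanh(λ)·sinh(a)/√(tanh²(b)·cosh²(λ) + sinh²(a)·sinh²(λ))) · log((sinh(b) + tanh(c)·sinh(λ))/(sinh(b) − tanh(c)·sinh(λ))) dλ tends to (1/4)·∫_0^b (1/cosh(λ)) · log((sinh(b) + tanh(c)·sinh(λ))/(sinh(b) − tanh(c)·sinh(λ))) dλ. -/
open Real Filter MeasureTheory intervalIntegral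

private lemma tanh_lt_one' (x : ℝ) : Real.tanh x < 1 := by
  rw [Real.tanh_eq_sinh_div_cosh, div_lt_one (Real.cosh_pos x)]
  nlinarith [Real.cosh_sq x, Real.cosh_pos x, Real.exp_pos (-x),
    Real.cosh_eq x, Real.sinh_eq x, Real.exp_pos x]

private lemma tanh_pos' {x : ℝ} (hx : 0 < x) : 0 < Real.tanh x := by
  rw [Real.tanh_eq_sinh_div_cosh]
  exact div_pos (by rwa [Real.sinh_pos_iff]) (Real.cosh_pos x)

private lemma tendsto_sinh_atTop' : Tendsto Real.sinh atTop atTop := by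
  have : Real.sinh = fun x => (Real.exp x - Real.exp (-x)) / 2 := by
    funext x; exact Real.sinh_eq x
  rw [this]
  apply Tendsto.atTop_div_const two_pos
  have h1 : Tendsto (fun x : ℝ => Real.exp x + -Real.exp (-x)) atTop atTop := by
    apply Filter.tendsto_atTop_add_right_of_le' (C := (-1:ℝ)) (hf := Real.tendsto_exp_atTop)
    filter_upwards [eventually_ge_atTop (0:ℝ)] with x hx
    have : Real.exp (-x) ≤ 1 := Real.exp_le_one_iff.mpr (by linarith)
    linarith
  exact h1.congr (fun x => by ring)

/-- Corollary to Theorem 1: letting the edge length `a` of the orthosceme tend to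
infinity, the volume tends to the volume of an orthosceme with one ideal vertex. -/
theorem orthosceme_volume_limit_a (b c : ℝ) (hb : 0 < b) (hc : 0 < c) :
    Filter.Tendsto
      (fun a : ℝ => (1 / 4) * ∫ l in (0:ℝ)..b,
        (Real.tanh l * Real.sinh a /
            Real.sqrt (Real.tanh b ^ 2 * Real.cosh l ^ 2 + Real.sinh a ^ 2 * Real.sinh l ^ 2)) *
          Real.log ((Real.sinh b + Real.tanh c * Real.sinh l) /
            (Real.sinh b - Real.tanh c * Real.sinh l)))
      Filter.atTop
      (nhds ((1 / 4) * ∫ l in (0:ℝ)..b,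
        (1 / Real.cosh l) *
          Real.log ((Real.sinh b + Real.tanh c * Real.sinh l) /
            (Real.sinh b - Real.tanh c * Real.sinh l)))) := by
  set L : ℝ → ℝ := fun l =>
    Real.log ((Real.sinh b + Real.tanh c * Real.sinh l) /
      (Real.sinh b - Real.tanh c * Real.sinh l)) with hLdef
  have hsb : 0 < Real.sinh b := by rwa [Real.sinh_pos_iff]
  have htc0 : 0 < Real.tanh c := tanh_pos' hc
  have htc1 : Real.tanh c < 1 := tanh_lt_one' c
  -- denominator positivity on [0, b]
  have hden : ∀ l ∈ Set.Icc (0:ℝ) b, 0 < Real.sinh b - Real.tanh c * Real.sinh l := by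
    intro l hl
    have h1 : Real.sinh l ≤ Real.sinh b := Real.sinh_le_sinh.mpr hl.2
    have h2 : 0 ≤ Real.sinh l := by rw [Real.sinh_nonneg_iff]; exact hl.1
    nlinarith
  have hnum : ∀ l ∈ Set.Icc (0:ℝ) b, 0 < Real.sinh b + Real.tanh c * Real.sinh l := by
    intro l hl
    have h2 : 0 ≤ Real.sinh l := by rw [Real.sinh_nonneg_iff]; exact hl.1
    nlinarith
  apply Filter.Tendsto.const_mul
  apply intervalIntegral.tendsto_integral_filter_of_dominated_convergence
    (bound := fun l => |L l|)
  · -- measurability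
    filter_upwards with a
    apply Measurable.aestronglyMeasurable
    apply Measurable.mul
    · have htanh : Measurable Real.tanh := by
        have : Real.tanh = fun x => Real.sinh x / Real.cosh x := by
          funext x; exact Real.tanh_eq_sinh_div_cosh x
        rw [this]
        exact Real.continuous_sinh.measurable.div Real.continuous_cosh.measurable
      exact ((htanh.mul measurable_const).div
        ((((measurable_const.mul ((Real.continuous_cosh.measurable).pow_const 2)).add
          (measurable_const.mul ((Real.continuous_sinh.measurable).pow_const 2)))).sqrt))
    · exact Real.measurable_log.comp
        (((measurable_const.add (measurable_const.mul Real.continuous_sinh.measurable)).div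
          (measurable_const.sub (measurable_const.mul Real.continuous_sinh.measurable))))
  · -- bound
    filter_upwards [eventually_ge_atTop (1:ℝ)] with a ha
    filter_upwards with l hl
    rw [Set.uIoc_of_le hb.le] at hl
    have hl0 : 0 < l := hl.1
    have hsl : 0 < Real.sinh l := by rwa [Real.sinh_pos_iff]
    have hsa : 0 < Real.sinh a := by rw [Real.sinh_pos_iff]; linarith
    have htl : 0 < Real.tanh l := tanh_pos' hl0
    have hsqrt : Real.sinh a * Real.sinh l ≤
        Real.sqrt (Real.tanh b ^ 2 * Real.cosh l ^ 2 + Real.sinh a ^ 2 * Real.sinh l ^ 2) := by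
      have : Real.sinh a * Real.sinh l = Real.sqrt (Real.sinh a ^ 2 * Real.sinh l ^ 2) := by
        rw [← mul_pow, Real.sqrt_sq (by positivity)]
      rw [this]
      apply Real.sqrt_le_sqrt
      nlinarith [sq_nonneg (Real.tanh b * Real.cosh l)]
    have hsqrtpos : 0 < Real.sqrt (Real.tanh b ^ 2 * Real.cosh l ^ 2 +
        Real.sinh a ^ 2 * Real.sinh l ^ 2) := lt_of_lt_of_le (by positivity) hsqrt
    have hfac : Real.tanh l * Real.sinh a /
        Real.sqrt (Real.tanh b ^ 2 * Real.cosh l ^ 2 + Real.sinh a ^ 2 * Real.sinh l ^ 2) ≤ 1 := by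
      rw [div_le_one hsqrtpos]
      calc Real.tanh l * Real.sinh a ≤ Real.sinh a * Real.sinh l := by
            rw [Real.tanh_eq_sinh_div_cosh]
            rw [div_mul_eq_mul_div, div_le_iff₀ (Real.cosh_pos l)]
            have h1 : 1 ≤ Real.cosh l := Real.one_le_cosh l
            nlinarith [mul_nonneg hsa.le hsl.le]
        _ ≤ _ := hsqrt
    have hfac0 : 0 ≤ Real.tanh l * Real.sinh a /
        Real.sqrt (Real.tanh b ^ 2 * Real.cosh l ^ 2 + Real.sinh a ^ 2 * Real.sinh l ^ 2) := by
      positivity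
    rw [Real.norm_eq_abs, abs_mul]
    calc |Real.tanh l * Real.sinh a /
          Real.sqrt (Real.tanh b ^ 2 * Real.cosh l ^ 2 + Real.sinh a ^ 2 * Real.sinh l ^ 2)| *
          |L l| ≤ 1 * |L l| := by
          apply mul_le_mul_of_nonneg_right _ (abs_nonneg _)
          rwa [abs_of_nonneg hfac0]
      _ = |L l| := one_mul _
  · -- bound integrable
    apply ContinuousOn.intervalIntegrable
    rw [Set.uIcc_of_le hb.le]
    apply ContinuousOn.abs
    apply ContinuousOn.log
    · apply ContinuousOn.div
      · fun_prop
      · fun_prop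
      · intro l hl; exact (hden l hl).ne'
    · intro l hl
      exact div_ne_zero (hnum l hl).ne' (hden l hl).ne'
  · -- pointwise limit
    filter_upwards with l hl
    rw [Set.uIoc_of_le hb.le] at hl
    have hl0 : 0 < l := hl.1
    have hsl : 0 < Real.sinh l := by rwa [Real.sinh_pos_iff]
    have hcl : 0 < Real.cosh l := Real.cosh_pos l
    apply Filter.Tendsto.mul_const
    -- show tanh l * sinh a / sqrt(...) → 1 / cosh l
    have key : Tendsto (fun a : ℝ => Real.tanh l /
        Real.sqrt (Real.tanh b ^ 2 * Real.cosh l ^ 2 / Real.sinh a ^ 2 + Real.sinh l ^ 2))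
        atTop (nhds (1 / Real.cosh l)) := by
      have h1 : Tendsto (fun a : ℝ => Real.tanh b ^ 2 * Real.cosh l ^ 2 / Real.sinh a ^ 2)
          atTop (nhds 0) := by
        apply Tendsto.div_atTop tendsto_const_nhds
        exact (tendsto_sinh_atTop'.atTop_mul_atTop₀ tendsto_sinh_atTop').congr
          (fun a => by ring)
      have h2 : Tendsto (fun a : ℝ => Real.sqrt (Real.tanh b ^ 2 * Real.cosh l ^ 2 /
          Real.sinh a ^ 2 + Real.sinh l ^ 2)) atTop (nhds (Real.sinh l)) := by
        have := (Real.continuous_sqrt.tendsto (Real.sinh l ^ 2)).comp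
          (by simpa using h1.add (tendsto_const_nhds (x := Real.sinh l ^ 2)))
        simpa [Real.sqrt_sq hsl.le, Function.comp_def] using this
      have h3 := (tendsto_const_nhds (x := Real.tanh l)).div h2 hsl.ne'
      convert h3 using 2
      · rfl
      rw [Real.tanh_eq_sinh_div_cosh]
      field_simp
    apply key.congr'
    filter_upwards [eventually_ge_atTop (1:ℝ)] with a ha
    have hsa : 0 < Real.sinh a := by rw [Real.sinh_pos_iff]; linarith
    have heq : Real.sqrt (Real.tanh b ^ 2 * Real.cosh l ^ 2 + Real.sinh a ^ 2 * Real.sinh l ^ 2)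
        = Real.sinh a * Real.sqrt (Real.tanh b ^ 2 * Real.cosh l ^ 2 / Real.sinh a ^ 2
          + Real.sinh l ^ 2) := by
      rw [← Real.sqrt_sq hsa.le, ← Real.sqrt_mul (by positivity)]
      congr 1
      field_simp
      simp [Real.sq_sqrt (sq_nonneg (Real.sinh a))]
    rw [heq]
    have hs2 : 0 < Real.sqrt (Real.tanh b ^ 2 * Real.cosh l ^ 2 / Real.sinh a ^ 2
        + Real.sinh l ^ 2) := Real.sqrt_pos.mpr (by positivity)
    field_simp
end

section
/- Let a, b > 0 be real numbers, let c = arcosh(cosh(a)·cosh(b)), α = arcsin(sinh(a)/sinh(c)), and β = arcsin(sinh(b)/sinh(c)). Then ∫_0^a ∫_0^{artanh((tanh(b)/sinh(a))·sinh(x))} cosh(y) dy dx = π/2 − α − β. -/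
open Real MeasureTheory intervalIntegral

/-- The inverse hyperbolic cosine, `arcosh x = log(x + √(x²−1))`. -/
noncomputable def arcosh (x : ℝ) : ℝ := Real.log (x + Real.sqrt (x ^ 2 - 1))

lemma my_integral_cosh (Y : ℝ) : (∫ y in (0:ℝ)..Y, Real.cosh y) = Real.sinh Y := by
  rw [intervalIntegral.integral_eq_sub_of_hasDerivAt
      (fun x _ => Real.hasDerivAt_sinh x)
      (Real.continuous_cosh.intervalIntegrable 0 Y), Real.sinh_zero, sub_zero]

lemma exp_half_log {r : ℝ} (hr : 0 < r) : Real.exp (Real.log r / 2) = Real.sqrt r := by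
  rw [Real.sqrt_eq_rpow, Real.rpow_def_of_pos hr]
  ring_nf

lemma my_sinh_artanh {t : ℝ} (h1 : -1 < t) (h2 : t < 1) :
    Real.sinh (_root_.artanh t) = t / Real.sqrt (1 - t ^ 2) := by
  have h1' : 0 < 1 + t := by linarith
  have h2' : 0 < 1 - t := by linarith
  have hD : 0 < 1 - t ^ 2 := by nlinarith
  set s := Real.sqrt (1 - t ^ 2) with hs
  have hs0 : 0 < s := Real.sqrt_pos.2 hD
  have hs2 : s ^ 2 = 1 - t ^ 2 := Real.sq_sqrt hD.le
  have hr : 0 < (1 + t) / (1 - t) := div_pos h1' h2'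
  have hsq : ((1 + t) / s) ^ 2 = (1 + t) / (1 - t) := by
    rw [div_pow, hs2]
    rw [div_eq_div_iff (by positivity) (by positivity)]
    ring
  have hsqrt : Real.sqrt ((1 + t) / (1 - t)) = (1 + t) / s := by
    rw [← hsq, Real.sqrt_sq (by positivity)]
  have hexp : Real.exp (_root_.artanh t) = (1 + t) / s := by
    rw [_root_.artanh, exp_half_log hr, hsqrt]
  have hexp' : Real.exp (-(_root_.artanh t)) = s / (1 + t) := by
    rw [Real.exp_neg, hexp, inv_div]
  rw [Real.sinh_eq, hexp, hexp']
  rw [div_eq_div_iff (by norm_num) (by positivity)]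
  field_simp
  linear_combination (-1 : ℝ) * hs2

lemma my_cosh_sinh_arcosh {x : ℝ} (hx : 1 ≤ x) :
    Real.cosh (_root_.arcosh x) = x ∧ Real.sinh (_root_.arcosh x) = Real.sqrt (x ^ 2 - 1) := by
  have hD : (0:ℝ) ≤ x ^ 2 - 1 := by nlinarith
  set s := Real.sqrt (x ^ 2 - 1) with hs
  have hs0 : 0 ≤ s := Real.sqrt_nonneg _
  have hs2 : s ^ 2 = x ^ 2 - 1 := Real.sq_sqrt hD
  have hxs : 0 < x + s := by nlinarith
  have hexp : Real.exp (_root_.arcosh x) = x + s := Real.exp_log hxs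
  have hexp' : Real.exp (-(_root_.arcosh x)) = x - s := by
    rw [Real.exp_neg, hexp]
    exact inv_eq_of_mul_eq_one_right (by nlinarith)
  constructor
  · rw [Real.cosh_eq, hexp, hexp']; ring
  · rw [Real.sinh_eq, hexp, hexp']; ring

lemma key_sqrt_arg (A B cb S cx sx : ℝ) (hA : 0 < A) (hcb : 0 < cb) (hS : 0 < S)
    (hS2 : S ^ 2 = A ^ 2 * cb ^ 2 + B ^ 2) (hcx2 : cx ^ 2 = sx ^ 2 + 1) :
    1 - (B / S * cx) ^ 2 = (A * cb / S) ^ 2 * (1 - (B / (cb * A) * sx) ^ 2) := by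
  have h1 : S ≠ 0 := hS.ne'
  have h2 : cb ≠ 0 := hcb.ne'
  have h3 : A ≠ 0 := hA.ne'
  field_simp
  linear_combination (-B^2) * hcx2 + hS2

lemma deriv_convert (A B cb S sx q : ℝ) (hA : 0 < A) (hcb : 0 < cb) (hS : 0 < S)
    (hq : 0 < q) :
    B / (cb * A) * sx / q = 1 / (A * cb / S * q) * (B / S * sx) := by
  have h1 : S ≠ 0 := hS.ne'
  have h2 : cb ≠ 0 := hcb.ne'
  have h3 : A ≠ 0 := hA.ne'
  have h4 : q ≠ 0 := hq.ne'
  field_simp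

set_option maxHeartbeats 1000000 in
/-- Two-dimensional case of the paper's method: the hyperbolic area (`k = 1`) of a
right triangle with legs `a` and `b`, computed in hyperbolic orthogonal coordinates,
equals its angular defect `π/2 − α − β`, where `c` is the hypotenuse and `α`, `β` are
the angles opposite to `a` and `b`. -/
theorem right_triangle_area (a b : ℝ) (ha : 0 < a) (hb : 0 < b) :
    ∀ c α β : ℝ,
      c = _root_.arcosh (Real.cosh a * Real.cosh b) →
      α = Real.arcsin (Real.sinh a / Real.sinh c) →
      β = Real.arcsin (Real.sinh b / Real.sinh c) →
      (∫ x in (0:ℝ)..a,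
          ∫ y in (0:ℝ)..(_root_.artanh ((Real.tanh b / Real.sinh a) * Real.sinh x)),
            Real.cosh y) = π / 2 - α - β := by
  intro c α β hc hα hβ
  have hA : 0 < Real.sinh a := Real.sinh_pos_iff.2 ha
  have hB : 0 < Real.sinh b := Real.sinh_pos_iff.2 hb
  set A := Real.sinh a with hAdef
  set B := Real.sinh b with hBdef
  set ca := Real.cosh a with hcadef
  set cb := Real.cosh b with hcbdef
  have hca1 : 1 ≤ ca := Real.one_le_cosh a
  have hcb1 : 1 ≤ cb := Real.one_le_cosh b
  have hca0 : 0 < ca := by linarith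
  have hcb0 : 0 < cb := by linarith
  have hca2 : ca ^ 2 = A ^ 2 + 1 := Real.cosh_sq a
  have hcb2 : cb ^ 2 = B ^ 2 + 1 := Real.cosh_sq b
  have hcc1 : 1 ≤ ca * cb := one_le_mul_of_one_le_of_one_le hca1 hcb1
  have hS2' : (0:ℝ) < (ca * cb) ^ 2 - 1 := by nlinarith
  set S := Real.sqrt ((ca * cb) ^ 2 - 1) with hSdef
  have hSpos : 0 < S := Real.sqrt_pos.2 hS2'
  have hS2 : S ^ 2 = A ^ 2 * cb ^ 2 + B ^ 2 := by
    rw [hSdef, Real.sq_sqrt hS2'.le]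
    linear_combination cb ^ 2 * hca2 + hcb2
  obtain ⟨hcoshc, hsinhc⟩ := my_cosh_sinh_arcosh hcc1
  rw [hc] at hα hβ
  -- the slope m
  have hm : Real.tanh b / A = B / (cb * A) := by
    rw [Real.tanh_eq_sinh_div_cosh, div_div]
  set m := B / (cb * A) with hmdef
  have hmpos : 0 < m := by positivity
  have hBca : (B * ca) ^ 2 = S ^ 2 - A ^ 2 := by
    linear_combination B ^ 2 * hca2 - hS2 - A ^ 2 * hcb2
  have hBcaS : B * ca < S :=
    lt_of_pow_lt_pow_left₀ 2 hSpos.le (by linarith [hBca, pow_pos hA 2])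
  have hBcb : B < cb :=
    lt_of_pow_lt_pow_left₀ 2 hcb0.le (by linarith [hcb2])
  -- bound on m * sinh x for x in [0, a]
  have huIcc : Set.uIcc (0:ℝ) a = Set.Icc 0 a := Set.uIcc_of_le ha.le
  have hbound : ∀ x ∈ Set.Icc (0:ℝ) a, 0 ≤ m * Real.sinh x ∧ m * Real.sinh x < 1 := by
    intro x hx
    have hx0 : 0 ≤ Real.sinh x := Real.sinh_nonneg_iff.2 hx.1
    have hxa : Real.sinh x ≤ A := Real.sinh_le_sinh.2 hx.2
    refine ⟨by positivity, ?_⟩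
    have h1 : m * Real.sinh x ≤ m * A := mul_le_mul_of_nonneg_left hxa hmpos.le
    have hmA : m * A = B / cb := by
      rw [hmdef]; field_simp
    have h2 : m * A < 1 := by
      rw [hmA, div_lt_one hcb0]; exact hBcb
    linarith
  -- Step 1: inner integral
  have hinner : ∀ x ∈ Set.uIcc (0:ℝ) a,
      (∫ y in (0:ℝ)..(_root_.artanh (Real.tanh b / A * Real.sinh x)), Real.cosh y)
        = m * Real.sinh x / Real.sqrt (1 - (m * Real.sinh x) ^ 2) := by
    intro x hx
    rw [huIcc] at hx
    obtain ⟨h0, h1⟩ := hbound x hx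
    rw [hm, my_integral_cosh, my_sinh_artanh (by linarith) h1]
  rw [intervalIntegral.integral_congr hinner]
  -- Step 2: FTC with F x = arcsin (B/S * cosh x)
  have hD : ∀ x ∈ Set.Icc (0:ℝ) a, 0 < 1 - (m * Real.sinh x) ^ 2 := by
    intro x hx
    obtain ⟨h0, h1⟩ := hbound x hx
    nlinarith [h0, h1]
  have hderiv : ∀ x ∈ Set.uIcc (0:ℝ) a,
      HasDerivAt (fun x => Real.arcsin (B / S * Real.cosh x))
        (m * Real.sinh x / Real.sqrt (1 - (m * Real.sinh x) ^ 2)) x := by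
    intro x hx
    rw [huIcc] at hx
    have hx0 : 0 ≤ x := hx.1
    have hcx1 : 1 ≤ Real.cosh x := Real.one_le_cosh x
    have hcxa : Real.cosh x ≤ ca := by
      rw [hcadef]
      exact Real.cosh_le_cosh.2 (by rw [abs_of_nonneg hx0, abs_of_nonneg ha.le]; exact hx.2)
    have hkx0 : 0 < B / S * Real.cosh x := by positivity
    have hkx1 : B / S * Real.cosh x < 1 := by
      rw [div_mul_eq_mul_div, div_lt_one hSpos]
      calc B * Real.cosh x ≤ B * ca := mul_le_mul_of_nonneg_left hcxa hB.le
        _ < S := hBcaS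
    have hcx2 : Real.cosh x ^ 2 = Real.sinh x ^ 2 + 1 := Real.cosh_sq x
    have hg : HasDerivAt (fun x => B / S * Real.cosh x) (B / S * Real.sinh x) x :=
      (Real.hasDerivAt_cosh x).const_mul (B / S)
    have harc := (Real.hasDerivAt_arcsin (by linarith) hkx1.ne).comp x hg
    refine harc.congr_deriv ?_
    symm
    have hDx : 0 < 1 - (m * Real.sinh x) ^ 2 := hD x hx
    have hkey := key_sqrt_arg A B cb S (Real.cosh x) (Real.sinh x) hA hcb0 hSpos hS2 hcx2
    rw [show (1:ℝ) - (B / S * Real.cosh x) ^ 2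
        = (A * cb / S) ^ 2 * (1 - (B / (cb * A) * Real.sinh x) ^ 2) from hkey]
    rw [Real.sqrt_mul (sq_nonneg _), Real.sqrt_sq (by positivity)]
    have hsq0 : 0 < Real.sqrt (1 - (B / (cb * A) * Real.sinh x) ^ 2) := by
      rw [← hmdef]; exact Real.sqrt_pos.2 hDx
    rw [hmdef]
    exact deriv_convert A B cb S (Real.sinh x)
      (Real.sqrt (1 - (B / (cb * A) * Real.sinh x) ^ 2)) hA hcb0 hSpos hsq0
  have hcont : ContinuousOn
      (fun x => m * Real.sinh x / Real.sqrt (1 - (m * Real.sinh x) ^ 2))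
      (Set.uIcc (0:ℝ) a) := by
    apply ContinuousOn.div
    · exact (continuous_const.mul Real.continuous_sinh).continuousOn
    · exact (Real.continuous_sqrt.comp
        (by continuity : Continuous fun x => 1 - (m * Real.sinh x) ^ 2)).continuousOn
    · intro x hx
      rw [huIcc] at hx
      exact (Real.sqrt_pos.2 (hD x hx)).ne'
  rw [intervalIntegral.integral_eq_sub_of_hasDerivAt hderiv hcont.intervalIntegrable]
  -- Step 3: evaluate endpoints
  rw [Real.cosh_zero, mul_one]
  rw [hα, hβ, hsinhc]
  have hend : Real.arcsin (B / S * ca) = π / 2 - Real.arcsin (A / S) := by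
    have hAS2 : A ^ 2 < S ^ 2 := by nlinarith [hBca, mul_pos hB hca0]
    have hAS : A < S := lt_of_pow_lt_pow_left₀ 2 hSpos.le hAS2
    have hAS1 : A / S ≤ 1 := by rw [div_le_one hSpos]; linarith
    have harc0 : 0 ≤ Real.arcsin (A / S) := Real.arcsin_nonneg.2 (by positivity)
    have harc1 : Real.arcsin (A / S) ≤ π / 2 := Real.arcsin_le_pi_div_two _
    have hsin : Real.sin (π / 2 - Real.arcsin (A / S)) = B / S * ca := by
      rw [Real.sin_pi_div_two_sub, Real.cos_arcsin]
      have h : 1 - (A / S) ^ 2 = (B / S * ca) ^ 2 := by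
        field_simp
        linear_combination (-1 : ℝ) * hBca
      rw [h, Real.sqrt_sq (by positivity)]
    rw [← hsin, Real.arcsin_sin (by linarith) (by linarith)]
  rw [hend]
end
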